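/- arXiv:math/9909177 — 8 statements merged into one kernel-verified Lean document; each statement's English description precedes it below -/
import Mathlib

section
/- The expected value of the squared determinant of a random n×n matrix with independent uniform ±1 entries equals n!. -/
open Matrix Finset

private def pm : Bool → ℝ := fun b => if b then 1 else -1

private lemma pm_mul_self (b : Bool) : pm b * pm b = 1 := by cases b <;> simp [pm]

private lemma pm_not (b : Bool) : pm (!b) = - pm b := by cases b <;> simp [pm]

private lemma key_sum (n : ℕ) (a b : Fin n) :
    ∑ g : Fin n → Bool, pm (g a) * pm (g b) = if a = b then (2:ℝ)^n else 0 := by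
  rcases eq_or_ne a b with rfl | h
  · simp only [if_pos rfl, pm_mul_self, Finset.sum_const, Finset.card_univ,
      Fintype.card_fun, Fintype.card_bool, Fintype.card_fin, nsmul_eq_mul, mul_one]
    norm_num
  · simp only [if_neg h]
    have hinv : Function.Involutive
        (fun g : Fin n → Bool => Function.update g a (!(g a))) := by
      intro g
      funext j
      rcases eq_or_ne j a with rfl | hj
      · simp
      · simp [Function.update_of_ne hj]
    set φ := hinv.toPerm with hφ
    have h1 : ∑ g : Fin n → Bool, pm (g a) * pm (g b)
        = ∑ g : Fin n → Bool, pm ((φ g) a) * pm ((φ g) b) :=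
      (Equiv.sum_comp φ (fun g => pm (g a) * pm (g b))).symm
    have h2 : ∀ g : Fin n → Bool,
        pm ((φ g) a) * pm ((φ g) b) = -(pm (g a) * pm (g b)) := by
      intro g
      have ha : (φ g) a = !(g a) := by
        simp [hφ, Function.Involutive.toPerm]
      have hb : (φ g) b = g b := by
        simp [hφ, Function.Involutive.toPerm, Function.update_of_ne (Ne.symm h)]
      rw [ha, hb, pm_not]; ring
    have h3 : ∑ g : Fin n → Bool, pm (g a) * pm (g b)
        = - ∑ g : Fin n → Bool, pm (g a) * pm (g b) := by
      calc ∑ g : Fin n → Bool, pm (g a) * pm (g b)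
          = ∑ g : Fin n → Bool, pm ((φ g) a) * pm ((φ g) b) := h1
        _ = ∑ g : Fin n → Bool, -(pm (g a) * pm (g b)) :=
            Finset.sum_congr rfl fun g _ => h2 g
        _ = - ∑ g : Fin n → Bool, pm (g a) * pm (g b) := Finset.sum_neg_distrib _
    linarith

/-- Szekeres–Turán: the expected value of the squared determinant of a random `n×n`
matrix with independent uniform ±1 entries equals `n!`. -/
theorem expected_sq_det_pm_one (n : ℕ) :
    (∑ f : Fin n → Fin n → Bool,
        (Matrix.det (Matrix.of fun i j => if f i j then (1 : ℝ) else -1)) ^ 2)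
      / 2 ^ (n * n) = Nat.factorial n := by
  have hdet : ∀ f : Fin n → Fin n → Bool,
      Matrix.det (Matrix.of fun i j => if f i j then (1 : ℝ) else -1)
        = ∑ σ : Equiv.Perm (Fin n),
            ((Equiv.Perm.sign σ : ℤ) : ℝ) * ∏ i, pm (f i (σ i)) := by
    intro f
    rw [← Matrix.det_transpose, Matrix.det_apply']
    simp [pm]
  have main : (∑ f : Fin n → Fin n → Bool,
      (Matrix.det (Matrix.of fun i j => if f i j then (1 : ℝ) else -1)) ^ 2)
      = (Nat.factorial n : ℝ) * 2 ^ (n * n) := by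
    have step1 : ∀ f : Fin n → Fin n → Bool,
        (Matrix.det (Matrix.of fun i j => if f i j then (1 : ℝ) else -1)) ^ 2
        = ∑ σ : Equiv.Perm (Fin n), ∑ τ : Equiv.Perm (Fin n),
            (((Equiv.Perm.sign σ : ℤ) : ℝ) * ((Equiv.Perm.sign τ : ℤ) : ℝ)) *
              ∏ i, pm (f i (σ i)) * pm (f i (τ i)) := by
      intro f
      rw [hdet, sq, Finset.sum_mul_sum]
      refine Finset.sum_congr rfl fun σ _ => Finset.sum_congr rfl fun τ _ => ?_
      rw [Finset.prod_mul_distrib]; ring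
    rw [Finset.sum_congr rfl fun f _ => step1 f]
    rw [Finset.sum_comm]
    have inner : ∀ σ : Equiv.Perm (Fin n),
        (∑ f : Fin n → Fin n → Bool, ∑ τ : Equiv.Perm (Fin n),
          (((Equiv.Perm.sign σ : ℤ) : ℝ) * ((Equiv.Perm.sign τ : ℤ) : ℝ)) *
            ∏ i, pm (f i (σ i)) * pm (f i (τ i)))
        = (2:ℝ) ^ (n * n) := by
      intro σ
      rw [Finset.sum_comm]
      have key2 : ∀ τ : Equiv.Perm (Fin n),
          (∑ f : Fin n → Fin n → Bool, ∏ i, pm (f i (σ i)) * pm (f i (τ i)))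
          = if σ = τ then (2:ℝ)^(n*n) else 0 := by
        intro τ
        have hfac : (∑ f : Fin n → Fin n → Bool, ∏ i, pm (f i (σ i)) * pm (f i (τ i)))
            = ∏ i, ∑ g : Fin n → Bool, pm (g (σ i)) * pm (g (τ i)) := by
          rw [Finset.prod_univ_sum (fun _ : Fin n => (Finset.univ : Finset (Fin n → Bool)))
            (fun i g => pm (g (σ i)) * pm (g (τ i)))]
          rw [Fintype.piFinset_univ]
        rw [hfac]
        simp only [key_sum]
        rcases eq_or_ne σ τ with rfl | hne
        · simp [Finset.prod_const, pow_mul]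
        · obtain ⟨i, hi⟩ : ∃ i, σ i ≠ τ i := by
            by_contra hc
            push_neg at hc
            exact hne (Equiv.ext hc)
          rw [if_neg hne]
          exact Finset.prod_eq_zero (Finset.mem_univ i) (if_neg hi)
      have : ∀ τ : Equiv.Perm (Fin n),
          (∑ f : Fin n → Fin n → Bool,
            (((Equiv.Perm.sign σ : ℤ) : ℝ) * ((Equiv.Perm.sign τ : ℤ) : ℝ)) *
              ∏ i, pm (f i (σ i)) * pm (f i (τ i)))
          = if σ = τ then (2:ℝ)^(n*n) else 0 := by
        intro τ
        rw [← Finset.mul_sum, key2]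
        rcases eq_or_ne σ τ with rfl | hne
        · simp only [if_pos rfl]
          have : ((Equiv.Perm.sign σ : ℤ) : ℝ) * ((Equiv.Perm.sign σ : ℤ) : ℝ) = 1 := by
            rcases Int.units_eq_one_or (Equiv.Perm.sign σ) with h | h <;> rw [h] <;> norm_num
          rw [this, one_mul]
        · simp [hne]
      rw [Finset.sum_congr rfl fun τ _ => this τ]
      simp
    rw [Finset.sum_congr rfl fun σ _ => inner σ]
    rw [Finset.sum_const, Finset.card_univ, Fintype.card_perm, Fintype.card_fin,
      nsmul_eq_mul]
  rw [main]
  rw [mul_div_assoc]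
  norm_num
end

section
/- The expected value of the squared determinant of a random d×d 0/1-matrix equals (d+1)!/2^{2d}. -/
open Matrix Finset Equiv

theorem col_prod (d : ℕ) (a b : Fin d) :
    (∏ r : Fin d, (if a = r ∨ b = r then (1:ℝ) else 2)) * 4
      = 2 ^ d * (if a = b then 2 else 1) := by
  have h1 : ∀ r : Fin d, (if a = r ∨ b = r then (1:ℝ) else 2) *
      (if r ∈ ({a, b} : Finset (Fin d)) then (2:ℝ) else 1) = 2 := by
    intro r
    by_cases h : a = r ∨ b = r
    · rcases h with h | h <;> subst h <;> simp
    · push_neg at h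
      have ha : ¬ r = a := fun hc => h.1 hc.symm
      have hb : ¬ r = b := fun hc => h.2 hc.symm
      simp [h.1, h.2, ha, hb]
  have h2 : (∏ r : Fin d, (if a = r ∨ b = r then (1:ℝ) else 2)) *
      (∏ r : Fin d, (if r ∈ ({a, b} : Finset (Fin d)) then (2:ℝ) else 1)) = 2 ^ d := by
    rw [← Finset.prod_mul_distrib, Finset.prod_congr rfl (fun r _ => h1 r),
      Finset.prod_const, Finset.card_univ, Fintype.card_fin]
  have h3 : (∏ r : Fin d, (if r ∈ ({a, b} : Finset (Fin d)) then (2:ℝ) else 1))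
      = if a = b then 2 else 4 := by
    rw [Finset.prod_ite_mem, Finset.univ_inter]
    by_cases hab : a = b
    · simp [hab]
    · rw [Finset.prod_const, Finset.card_pair hab]
      norm_num [hab]
  rw [h3] at h2
  by_cases hab : a = b <;> simp [hab] at h2 ⊢ <;> nlinarith [h2]

theorem prod_perm_eq (d : ℕ) (σ : Perm (Fin d)) (g : Fin d × Fin d → Bool) :
    (∏ i : Fin d, (if g (σ i, i) then (1:ℝ) else 0))
      = ∏ p : Fin d × Fin d,
          (if g p then (1:ℝ) else 0) ^ (if σ p.2 = p.1 then 1 else 0) := by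
  rw [← Equiv.prod_comp (Equiv.prodComm (Fin d) (Fin d))
    (fun p : Fin d × Fin d => (if g p then (1:ℝ) else 0) ^ (if σ p.2 = p.1 then 1 else 0))]
  rw [Fintype.prod_prod_type]
  simp only [Equiv.prodComm_apply, Prod.swap_prod_mk, Prod.fst_swap, Prod.snd_swap]
  refine Finset.prod_congr rfl fun c _ => ?_
  have : ∀ r : Fin d, (if g (r, c) then (1:ℝ) else 0) ^ (if σ c = r then 1 else 0)
      = if σ c = r then (if g (r, c) then (1:ℝ) else 0) else 1 := by
    intro r; by_cases h : σ c = r <;> simp [h]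
  erw [Finset.prod_congr rfl fun r _ => this r, Finset.prod_ite_eq]
  simp

theorem sumf (d : ℕ) (σ τ : Perm (Fin d)) :
    (∑ f : Fin d → Fin d → Bool,
        (∏ i : Fin d, (if f (σ i) i then (1:ℝ) else 0)) *
         ∏ i : Fin d, (if f (τ i) i then (1:ℝ) else 0)) * 4 ^ d
      = 2 ^ (d * d) * ∏ j : Fin d, (if σ j = τ j then (2:ℝ) else 1) := by
  have step1 : (∑ f : Fin d → Fin d → Bool,
        (∏ i : Fin d, (if f (σ i) i then (1:ℝ) else 0)) *
         ∏ i : Fin d, (if f (τ i) i then (1:ℝ) else 0))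
      = ∑ g : Fin d × Fin d → Bool,
          ∏ p : Fin d × Fin d, (if g p then (1:ℝ) else 0) ^
            ((if σ p.2 = p.1 then 1 else 0) + (if τ p.2 = p.1 then 1 else 0)) := by
    rw [← Fintype.sum_equiv (Equiv.curry (Fin d) (Fin d) Bool)
      (fun g => ∏ p : Fin d × Fin d, (if g p then (1:ℝ) else 0) ^
            ((if σ p.2 = p.1 then 1 else 0) + (if τ p.2 = p.1 then 1 else 0)))
      (fun f => (∏ i : Fin d, (if f (σ i) i then (1:ℝ) else 0)) *
         ∏ i : Fin d, (if f (τ i) i then (1:ℝ) else 0))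
      (fun g => ?_)]
    rw [show (Equiv.curry (Fin d) (Fin d) Bool g) = fun i j => g (i, j) from rfl]
    simp only []
    rw [prod_perm_eq d σ g, prod_perm_eq d τ g, ← Finset.prod_mul_distrib]
    exact Finset.prod_congr rfl fun p _ => pow_add _ _ _
  rw [step1, ← Fintype.prod_sum
    (fun (p : Fin d × Fin d) (b : Bool) => (if b then (1:ℝ) else 0) ^
      ((if σ p.2 = p.1 then 1 else 0) + (if τ p.2 = p.1 then 1 else 0)))]
  have step2 : ∀ p : Fin d × Fin d, (∑ b : Bool, (if b then (1:ℝ) else 0) ^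
      ((if σ p.2 = p.1 then 1 else 0) + (if τ p.2 = p.1 then 1 else 0)))
      = if σ p.2 = p.1 ∨ τ p.2 = p.1 then 1 else 2 := by
    intro p
    by_cases h1 : σ p.2 = p.1 <;> by_cases h2 : τ p.2 = p.1 <;> simp [h1, h2]
  rw [Finset.prod_congr rfl fun p _ => step2 p]
  rw [← Equiv.prod_comp (Equiv.prodComm (Fin d) (Fin d))
    (fun p : Fin d × Fin d => if σ p.2 = p.1 ∨ τ p.2 = p.1 then (1:ℝ) else 2)]
  rw [Fintype.prod_prod_type]
  simp only [Equiv.prodComm_apply, Prod.fst_swap, Prod.snd_swap]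
  have : (4 : ℝ) ^ d = ∏ _c : Fin d, (4:ℝ) := by simp
  erw [this, ← Finset.prod_mul_distrib,
    Finset.prod_congr rfl fun c _ => col_prod d (σ c) (τ c),
    Finset.prod_mul_distrib, Finset.prod_const, Finset.card_univ, Fintype.card_fin,
    ← pow_mul]

theorem sum_perm (d : ℕ) :
    ∑ π : Perm (Fin d), ((Equiv.Perm.sign π : ℤ) : ℝ) *
        ∏ k : Fin d, (if k = π k then (2:ℝ) else 1) = d + 1 := by
  have hN : (Matrix.of fun i j : Fin d => if j = i then (2:ℝ) else 1)
      = 1 + Matrix.replicateCol Unit (fun _ => (1:ℝ)) * Matrix.replicateRow Unit (fun _ => (1:ℝ)) := by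
    ext i j
    by_cases h : j = i
    · simp [Matrix.one_apply, Matrix.mul_apply, h]
      norm_num
    · simp [Matrix.one_apply, Matrix.mul_apply, h, Ne.symm h]
  have h1 := Matrix.det_apply' (Matrix.of fun i j : Fin d => if j = i then (2:ℝ) else 1)
  have h2 : (Matrix.of fun i j : Fin d => if j = i then (2:ℝ) else 1).det = d + 1 := by
    rw [hN, Matrix.det_one_add_replicateCol_mul_replicateRow]
    simp [dotProduct]
    ring
  rw [h1] at h2
  simpa using h2

/-- The expected value of the squared determinant of a random `d×d` 0/1-matrix equals
`(d+1)!/2^(2d)`. -/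
theorem expected_sq_det_zero_one (d : ℕ) :
    (∑ f : Fin d → Fin d → Bool,
        (Matrix.det (Matrix.of fun i j => if f i j then (1 : ℝ) else 0)) ^ 2)
      / 2 ^ (d * d) = Nat.factorial (d + 1) / 2 ^ (2 * d) := by
  rw [div_eq_div_iff (by positivity) (by positivity)]
  have hdet : ∀ f : Fin d → Fin d → Bool,
      (Matrix.det (Matrix.of fun i j => if f i j then (1 : ℝ) else 0))
      = ∑ σ : Perm (Fin d), ((Equiv.Perm.sign σ : ℤ) : ℝ) *
          ∏ i : Fin d, (if f (σ i) i then (1:ℝ) else 0) := by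
    intro f
    rw [Matrix.det_apply']
    simp [Matrix.of_apply]
  have e1 : (∑ f : Fin d → Fin d → Bool,
        (Matrix.det (Matrix.of fun i j => if f i j then (1 : ℝ) else 0)) ^ 2)
      = ∑ σ : Perm (Fin d), ∑ τ : Perm (Fin d),
          (((Equiv.Perm.sign σ : ℤ) : ℝ) * ((Equiv.Perm.sign τ : ℤ) : ℝ)) *
          ∑ f : Fin d → Fin d → Bool,
            (∏ i : Fin d, (if f (σ i) i then (1:ℝ) else 0)) *
             ∏ i : Fin d, (if f (τ i) i then (1:ℝ) else 0) := by
    simp_rw [hdet, sq, Fintype.sum_mul_sum]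
    rw [Finset.sum_comm]
    refine Finset.sum_congr rfl fun σ _ => ?_
    rw [Finset.sum_comm]
    refine Finset.sum_congr rfl fun τ _ => ?_
    rw [Finset.mul_sum]
    exact Finset.sum_congr rfl fun f _ => by ring
  have e2 : ∀ σ : Perm (Fin d), ∑ τ : Perm (Fin d),
      ((((Equiv.Perm.sign σ : ℤ) : ℝ) * ((Equiv.Perm.sign τ : ℤ) : ℝ)) *
        (2 ^ (d * d) * ∏ j : Fin d, (if σ j = τ j then (2:ℝ) else 1)))
      = 2 ^ (d * d) * (d + 1) := by
    intro σ
    rw [← Equiv.sum_comp (Equiv.mulRight σ) (fun τ : Perm (Fin d) =>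
      ((((Equiv.Perm.sign σ : ℤ) : ℝ) * ((Equiv.Perm.sign τ : ℤ) : ℝ)) *
        (2 ^ (d * d) * ∏ j : Fin d, (if σ j = τ j then (2:ℝ) else 1))))]
    have hterm : ∀ π : Perm (Fin d),
        ((((Equiv.Perm.sign σ : ℤ) : ℝ) * ((Equiv.Perm.sign (Equiv.mulRight σ π) : ℤ) : ℝ)) *
          (2 ^ (d * d) * ∏ j : Fin d, (if σ j = (Equiv.mulRight σ π) j then (2:ℝ) else 1)))
        = 2 ^ (d * d) * (((Equiv.Perm.sign π : ℤ) : ℝ) *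
            ∏ k : Fin d, (if k = π k then (2:ℝ) else 1)) := by
      intro π
      have h1 : Equiv.mulRight σ π = π * σ := rfl
      have hsq : ((Equiv.Perm.sign σ : ℤ) : ℝ) * ((Equiv.Perm.sign σ : ℤ) : ℝ) = 1 := by
        rcases Int.units_eq_one_or (Equiv.Perm.sign σ) with h | h <;> rw [h] <;> norm_num
      have hsgn : ((Equiv.Perm.sign (π * σ) : ℤ) : ℝ)
          = ((Equiv.Perm.sign π : ℤ) : ℝ) * ((Equiv.Perm.sign σ : ℤ) : ℝ) := by
        rw [Equiv.Perm.sign_mul]; push_cast [Units.val_mul]; ring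
      have hprod : (∏ j : Fin d, (if σ j = (π * σ) j then (2:ℝ) else 1))
          = ∏ k : Fin d, (if k = π k then (2:ℝ) else 1) := by
        simp only [Equiv.Perm.mul_apply]
        exact Equiv.prod_comp σ (fun k => if k = π k then (2:ℝ) else 1)
      rw [h1, hsgn, hprod]
      linear_combination (((Equiv.Perm.sign π : ℤ) : ℝ) *
        (2 ^ (d * d) * ∏ k : Fin d, (if k = π k then (2:ℝ) else 1))) * hsq
    rw [Finset.sum_congr rfl fun π _ => hterm π, ← Finset.mul_sum, sum_perm]
  have e3 : (∑ f : Fin d → Fin d → Bool,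
        (Matrix.det (Matrix.of fun i j => if f i j then (1 : ℝ) else 0)) ^ 2) * 4 ^ d
      = 2 ^ (d * d) * ((Nat.factorial (d + 1) : ℝ)) := by
    rw [e1, Finset.sum_mul]
    have : ∀ σ : Perm (Fin d), (∑ τ : Perm (Fin d),
          (((Equiv.Perm.sign σ : ℤ) : ℝ) * ((Equiv.Perm.sign τ : ℤ) : ℝ)) *
          ∑ f : Fin d → Fin d → Bool,
            (∏ i : Fin d, (if f (σ i) i then (1:ℝ) else 0)) *
             ∏ i : Fin d, (if f (τ i) i then (1:ℝ) else 0)) * 4 ^ d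
        = 2 ^ (d * d) * (d + 1) := by
      intro σ
      rw [Finset.sum_mul, ← e2 σ]
      refine Finset.sum_congr rfl fun τ _ => ?_
      rw [mul_assoc, sumf d σ τ]
    rw [Finset.sum_congr rfl fun σ _ => this σ, Finset.sum_const, Finset.card_univ,
      Fintype.card_perm, Fintype.card_fin, nsmul_eq_mul]
    rw [Nat.factorial_succ]
    push_cast
    ring
  have h4 : (2:ℝ) ^ (2 * d) = 4 ^ d := by
    rw [pow_mul]; norm_num
  rw [h4]
  rw [e3]
  ring
end

section
/- There exists a d×d 0/1-matrix A with |det(A)| ≥ √((d+1)!)/2^d. -/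
open Matrix

namespace ZeroOneDet

noncomputable def φ (t : Bool) : ℝ := if t then 1 else 0

lemma phi_mul_self (t : Bool) : φ t * φ t = φ t := by cases t <;> simp [φ]

variable {d : ℕ}

lemma filter_pair (a b : Fin d) :
    Finset.filter (fun j => j = a ∨ j = b) Finset.univ = {a, b} := by
  ext j; simp

lemma row_sum (a b : Fin d) :
    (∑ r : Fin d → Bool, φ (r a) * φ (r b)) = 2 ^ d / 4 * (if a = b then 2 else 1) := by
  classical
  have h1 : ∀ r : Fin d → Bool, φ (r a) * φ (r b)
      = ∏ j, (if j = a ∨ j = b then φ (r j) else 1) := by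
    intro r
    rw [Finset.prod_ite, Finset.prod_const_one, mul_one, filter_pair]
    by_cases h : a = b
    · subst h; simp [phi_mul_self]
    · rw [Finset.prod_insert (by simp [h]), Finset.prod_singleton]
  simp_rw [h1]
  rw [← Fintype.prod_sum (fun j (x : Bool) => if j = a ∨ j = b then φ x else 1)]
  have h2 : ∀ j : Fin d, (∑ x : Bool, if j = a ∨ j = b then φ x else 1)
      = if j = a ∨ j = b then 1 else 2 := by
    intro j; by_cases h : j = a ∨ j = b <;> simp [h, φ]
  simp_rw [h2]
  rw [Finset.prod_ite, Finset.prod_const_one, Finset.prod_const, one_mul]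
  have hcard := Finset.card_filter_add_card_filter_not
    (s := (Finset.univ : Finset (Fin d))) (p := fun j => j = a ∨ j = b)
  rw [filter_pair, Finset.card_univ, Fintype.card_fin] at hcard
  by_cases h : a = b
  · subst h
    simp only [Finset.pair_eq_singleton, Finset.card_singleton] at hcard
    have he : (Finset.filter (fun j => ¬(j = a ∨ j = a)) Finset.univ).card = d - 1 := by omega
    have hp : (2:ℝ) ^ d = 2 ^ (d - 1) * 2 := by
      conv_lhs => rw [show d = (d - 1) + 1 by omega]
      rw [pow_succ]
    rw [he, if_pos rfl, hp]
    ring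
  · have hc2 : ({a, b} : Finset (Fin d)).card = 2 := by
      rw [Finset.card_insert_of_notMem (by simp [h]), Finset.card_singleton]
    rw [hc2] at hcard
    have hd : 2 ≤ d := by
      have := Finset.card_le_univ ({a, b} : Finset (Fin d))
      simpa [hc2] using this
    have he : (Finset.filter (fun j => ¬(j = a ∨ j = b)) Finset.univ).card = d - 2 := by omega
    have hp : (2:ℝ) ^ d = 2 ^ (d - 2) * 4 := by
      conv_lhs => rw [show d = (d - 2) + 2 by omega]
      rw [pow_add]; norm_num
    rw [he, if_neg h, hp]
    ring

lemma detB (d : ℕ) :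
    ∑ π : Equiv.Perm (Fin d), ((Equiv.Perm.sign π : ℤ) : ℝ)
      * ∏ i, (if π i = i then (2:ℝ) else 1) = d + 1 := by
  set B : Matrix (Fin d) (Fin d) ℝ :=
    1 + replicateCol Unit (fun _ : Fin d => (1:ℝ)) * replicateRow Unit (fun _ : Fin d => (1:ℝ)) with hBdef
  have hB : ∀ i j : Fin d, B i j = if i = j then 2 else 1 := by
    intro i j
    by_cases h : i = j <;>
      simp [hBdef, Matrix.add_apply, Matrix.one_apply, Matrix.mul_apply, h] <;> norm_num
  have h1 : B.det = 1 + (fun _ : Fin d => (1:ℝ)) ⬝ᵥ (fun _ => (1:ℝ)) :=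
    Matrix.det_one_add_replicateCol_mul_replicateRow (ι := Unit) _ _
  rw [Matrix.det_apply'] at h1
  simp only [hB] at h1
  rw [h1]
  simp [dotProduct, add_comm]


lemma inner_sum (d : ℕ) (σ : Equiv.Perm (Fin d)) :
    ∑ τ : Equiv.Perm (Fin d),
        (((Equiv.Perm.sign σ : ℤ) : ℝ) * ((Equiv.Perm.sign τ : ℤ) : ℝ))
          * ∏ i, (if σ i = τ i then (2:ℝ) else 1) = d + 1 := by
  rw [← Equiv.sum_comp (Equiv.mulLeft σ)]
  rw [← detB d]
  apply Finset.sum_congr rfl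
  intro π _
  have hs : ((Equiv.Perm.sign σ : ℤ) : ℝ) * ((Equiv.Perm.sign (σ * π) : ℤ) : ℝ)
      = ((Equiv.Perm.sign π : ℤ) : ℝ) := by
    rw [_root_.map_mul]
    push_cast
    have : ((Equiv.Perm.sign σ : ℤ) : ℝ) * ((Equiv.Perm.sign σ : ℤ) : ℝ) = 1 := by
      rcases Int.units_eq_one_or (Equiv.Perm.sign σ) with h | h <;> rw [h] <;> norm_num
    rw [← mul_assoc, this, one_mul]
  have hprod : ∀ i, (if σ i = (σ * π) i then (2:ℝ) else 1) = (if π i = i then (2:ℝ) else 1) := by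
    intro i
    have : (σ i = (σ * π) i) ↔ (π i = i) := by
      rw [Equiv.Perm.mul_apply, σ.injective.eq_iff, eq_comm]
    exact if_congr this rfl rfl
  simp only [Equiv.coe_mulLeft] at *
  rw [hs]
  congr 1
  exact Finset.prod_congr rfl (fun i _ => hprod i)

lemma key (d : ℕ) :
    ∑ ω : Fin d → Fin d → Bool, (Matrix.det (Matrix.of fun i j => φ (ω j i)))^2
      = (Nat.factorial (d+1) : ℝ) * 2^(d*d) / 4^d := by
  classical
  have expand : ∀ ω : Fin d → Fin d → Bool,
      (Matrix.det (Matrix.of fun i j => φ (ω j i)))^2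
        = ∑ σ : Equiv.Perm (Fin d), ∑ τ : Equiv.Perm (Fin d),
            (((Equiv.Perm.sign σ : ℤ) : ℝ) * ((Equiv.Perm.sign τ : ℤ) : ℝ))
              * ∏ i, (φ ((ω i) (σ i)) * φ ((ω i) (τ i))) := by
    intro ω
    rw [sq, Matrix.det_apply', Fintype.sum_mul_sum]
    refine Finset.sum_congr rfl fun σ _ => Finset.sum_congr rfl fun τ _ => ?_
    rw [Finset.prod_mul_distrib]
    simp only [Matrix.of_apply]
    ring
  simp_rw [expand]
  rw [Finset.sum_comm]
  have step : ∀ σ : Equiv.Perm (Fin d),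
      (∑ ω : Fin d → Fin d → Bool, ∑ τ : Equiv.Perm (Fin d),
        (((Equiv.Perm.sign σ : ℤ) : ℝ) * ((Equiv.Perm.sign τ : ℤ) : ℝ))
          * ∏ i, (φ ((ω i) (σ i)) * φ ((ω i) (τ i))))
      = (2^d/4 : ℝ)^d * (d + 1) := by
    intro σ
    rw [Finset.sum_comm]
    have hτ : ∀ τ : Equiv.Perm (Fin d),
        (∑ ω : Fin d → Fin d → Bool,
          (((Equiv.Perm.sign σ : ℤ) : ℝ) * ((Equiv.Perm.sign τ : ℤ) : ℝ))
            * ∏ i, (φ ((ω i) (σ i)) * φ ((ω i) (τ i))))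
        = (2^d/4 : ℝ)^d *
            ((((Equiv.Perm.sign σ : ℤ) : ℝ) * ((Equiv.Perm.sign τ : ℤ) : ℝ))
              * ∏ i, (if σ i = τ i then (2:ℝ) else 1)) := by
      intro τ
      rw [← Finset.mul_sum]
      rw [← Fintype.prod_sum (fun i (r : Fin d → Bool) => φ (r (σ i)) * φ (r (τ i)))]
      have : ∀ i : Fin d, (∑ r : Fin d → Bool, φ (r (σ i)) * φ (r (τ i)))
          = 2 ^ d / 4 * (if σ i = τ i then 2 else 1) := fun i => row_sum (σ i) (τ i)
      simp_rw [this]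
      rw [Finset.prod_mul_distrib, Finset.prod_const, Finset.card_univ, Fintype.card_fin]
      ring
    simp_rw [hτ]
    rw [← Finset.mul_sum, inner_sum]
  simp_rw [step]
  rw [Finset.sum_const, Finset.card_univ, Fintype.card_perm, Fintype.card_fin, nsmul_eq_mul]
  have hfac : (Nat.factorial (d+1) : ℝ) = (d+1) * Nat.factorial d := by
    rw [Nat.factorial_succ]; push_cast; ring
  have hpow : ((2:ℝ)^d/4)^d = 2^(d*d) / 4^d := by
    rw [div_pow, ← pow_mul]
  rw [hpow, hfac]
  ring

end ZeroOneDet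

open ZeroOneDet in
/-- There exists a `d×d` 0/1-matrix `A` with `|det A| ≥ √((d+1)!)/2^d`. -/
theorem exists_zero_one_matrix_large_det (d : ℕ) :
    ∃ A : Matrix (Fin d) (Fin d) ℝ,
      (∀ i j, A i j = 0 ∨ A i j = 1) ∧
      Real.sqrt (Nat.factorial (d + 1)) / 2 ^ d ≤ |A.det| := by
  classical
  have havg : ∃ ω ∈ (Finset.univ : Finset (Fin d → Fin d → Bool)),
      (Nat.factorial (d+1) : ℝ) / 4 ^ d
        ≤ (Matrix.det (Matrix.of fun i j => φ (ω j i)))^2 := by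
    apply Finset.exists_le_of_sum_le Finset.univ_nonempty
    rw [key, Finset.sum_const, Finset.card_univ, nsmul_eq_mul]
    have hcard : Fintype.card (Fin d → Fin d → Bool) = 2 ^ (d * d) := by
      rw [Fintype.card_fun, Fintype.card_fun, Fintype.card_bool, Fintype.card_fin, ← pow_mul]
    rw [hcard]
    push_cast
    ring_nf
    exact le_refl _
  obtain ⟨ω, -, hω⟩ := havg
  refine ⟨Matrix.of fun i j => φ (ω j i), fun i j => ?_, ?_⟩
  · cases h : ω j i <;> simp [φ, h]
  · have h2 : Real.sqrt ((Nat.factorial (d+1) : ℝ) / 4 ^ d)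
        ≤ |(Matrix.of fun i j => φ (ω j i)).det| := by
      rw [← Real.sqrt_sq_eq_abs]
      exact Real.sqrt_le_sqrt hω
    have h3 : Real.sqrt ((Nat.factorial (d+1) : ℝ) / 4 ^ d)
        = Real.sqrt (Nat.factorial (d + 1)) / 2 ^ d := by
      rw [Real.sqrt_div (by positivity)]
      congr 1
      rw [show ((4:ℝ)^d) = (2^d)^2 by rw [← pow_mul, mul_comm, pow_mul]; norm_num]
      exact Real.sqrt_sq (by positivity)
    rw [← h3]
    exact h2
end

section
/- The absolute value of the determinant of any d×d 0/1-matrix is at most √(d+1)^{d+1} / 2^d. -/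
open Matrix Finset

private lemma amgm_aux {ι : Type*} [Fintype ι] [Nonempty ι] (z : ι → ℝ) (hz : ∀ i, 0 ≤ z i) :
    ∏ i, z i ≤ ((∑ i, z i) / (Fintype.card ι)) ^ (Fintype.card ι) := by
  have hn : (0:ℝ) < Fintype.card ι := by positivity
  have h := Real.geom_mean_le_arith_mean Finset.univ (fun _ => 1) z (by simp) (by simpa using hn)
    (fun i _ => hz i)
  simp only [Real.rpow_one, Finset.sum_const, Finset.card_univ, nsmul_eq_mul, mul_one, one_mul] at h
  have h2 : (∏ i, z i) = (((∏ i, z i) ^ ((Fintype.card ι:ℝ))⁻¹) ^ (Fintype.card ι : ℝ)) := by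
    rw [← Real.rpow_mul
      (Finset.prod_nonneg fun i _ => hz i), inv_mul_cancel₀ (ne_of_gt hn), Real.rpow_one]
  calc ∏ i, z i = _ := h2
    _ ≤ ((∑ i, z i) / (Fintype.card ι)) ^ (Fintype.card ι : ℝ) := by
        apply Real.rpow_le_rpow (Real.rpow_nonneg (Finset.prod_nonneg fun i _ => hz i) _) ?_ hn.le
        convert h using 2
    _ = _ := by rw [Real.rpow_natCast]

private lemma det_le_trace_div_pow {ι : Type*} [Fintype ι] [DecidableEq ι] [Nonempty ι]
    {M : Matrix ι ι ℝ} (hM : M.PosSemidef) :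
    M.det ≤ (M.trace / (Fintype.card ι)) ^ (Fintype.card ι) := by
  have hH := hM.isHermitian
  have hdet : M.det = ∏ i, hH.eigenvalues i := by
    simpa using hH.det_eq_prod_eigenvalues
  have htr : M.trace = ∑ i, hH.eigenvalues i := by
    nth_rewrite 1 [hH.spectral_theorem]
    rw [Unitary.conjStarAlgAut_apply, Matrix.trace_mul_cycle]
    simp [Matrix.trace_diagonal]
  rw [hdet, htr]
  exact amgm_aux _ (fun i => hM.eigenvalues_nonneg i)

/-- Hadamard bound for 0/1-matrices: `|det A| ≤ √(d+1)^(d+1) / 2^d`. -/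
theorem abs_det_zero_one_le (d : ℕ) (A : Matrix (Fin d) (Fin d) ℝ)
    (hA : ∀ i j, A i j = 0 ∨ A i j = 1) :
    |A.det| ≤ Real.sqrt (d + 1) ^ (d + 1) / 2 ^ d := by
  set n : ℕ := d + 1 with hn
  set Bh : Matrix (Fin 1 ⊕ Fin d) (Fin 1 ⊕ Fin d) ℝ :=
    fromBlocks 1 (fun _ _ => 1) (fun _ _ => 1) (fun i j => 1 - 2 * A i j) with hBh
  set B : Matrix (Fin 1 ⊕ Fin d) (Fin 1 ⊕ Fin d) ℝ :=
    fromBlocks 1 (fun _ _ => 1) 0 (fun i j => -2 * A i j) with hB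
  have hcard : Fintype.card (Fin 1 ⊕ Fin d) = n := by simp [hn, Nat.add_comm]
  have hBh1 : ∀ i j, Bh i j = 1 ∨ Bh i j = -1 := by
    rintro (i | i) (j | j) <;> simp [hBh, fromBlocks, Matrix.one_apply, Fin.ext_iff] <;>
      rcases hA i j with h | h <;> simp [h] <;> norm_num
  have hdetBh : Bh.det = B.det := by
    apply Matrix.det_eq_of_forall_row_eq_smul_add_const
      (B := B) (Sum.elim (fun _ => (0:ℝ)) (fun _ => 1)) (Sum.inl 0) rfl
    rintro (i | i) (j | j) <;>
      simp [hBh, hB, fromBlocks, Matrix.one_apply, Fin.eq_zero] <;> ring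
  have hdetB : B.det = (-2) ^ d * A.det := by
    rw [hB]
    erw [Matrix.det_fromBlocks_zero₂₁]
    have e : (fun i j => (-2:ℝ) * A i j) = (-2 : ℝ) • A := by ext i j; simp
    rw [e, Matrix.det_smul, Fintype.card_fin, Matrix.det_one, one_mul]
  have hPSD : (Bhᴴ * Bh).PosSemidef := Matrix.posSemidef_conjTranspose_mul_self Bh
  have hdiag : ∀ i, (Bhᴴ * Bh) i i = n := by
    intro i
    have hsq : ∀ k, Bh k i * Bh k i = 1 := by
      intro k; rcases hBh1 k i with h | h <;> rw [h] <;> ring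
    simp [Matrix.mul_apply, Matrix.conjTranspose_apply, hsq, hcard]
  have htr : (Bhᴴ * Bh).trace = n * n := by
    rw [Matrix.trace]
    simp only [Matrix.diag_apply, hdiag, Finset.sum_const, Finset.card_univ, hcard, nsmul_eq_mul]
  have hdetsq : Bh.det ^ 2 = (Bhᴴ * Bh).det := by
    rw [Matrix.det_mul, Matrix.det_conjTranspose, star_trivial]; ring
  have key : Bh.det ^ 2 ≤ (n : ℝ) ^ n := by
    rw [hdetsq]
    calc (Bhᴴ * Bh).det ≤ ((Bhᴴ * Bh).trace / (Fintype.card (Fin 1 ⊕ Fin d))) ^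
          (Fintype.card (Fin 1 ⊕ Fin d)) := det_le_trace_div_pow hPSD
      _ = (n : ℝ) ^ n := by
          rw [htr, hcard]
          congr 1
          have : (0:ℝ) < n := by positivity
          field_simp
  have h2 : |Bh.det| ≤ Real.sqrt n ^ n := by
    rw [← Real.sqrt_sq_eq_abs]
    calc Real.sqrt (Bh.det ^ 2) ≤ Real.sqrt ((n:ℝ) ^ n) := Real.sqrt_le_sqrt key
      _ = Real.sqrt n ^ n := by
          rw [show ((n:ℝ)^n) = (Real.sqrt n ^ n)^2 by
              rw [← pow_mul, mul_comm, pow_mul, Real.sq_sqrt (by positivity)],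
            Real.sqrt_sq (by positivity)]
  have h3 : |Bh.det| = 2 ^ d * |A.det| := by
    rw [hdetBh, hdetB, abs_mul, abs_pow, abs_neg]
    norm_num
  rw [h3] at h2
  rw [le_div_iff₀ (by positivity : (0:ℝ) < 2^d)]
  calc |A.det| * 2 ^ d = 2 ^ d * |A.det| := mul_comm _ _
    _ ≤ Real.sqrt n ^ n := h2
    _ = Real.sqrt (↑d + 1) ^ (d + 1) := by rw [hn]; push_cast; ring
end

section
/- If an (n+1)×(n+1) ±1-matrix M satisfies |det(M)| = (n+1)^{(n+1)/2} with n+1 > 2, then n+1 is divisible by 4. -/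
open Matrix

/-- Hadamard matrices of order `> 2` exist only in orders divisible by 4: if an
`(n+1)×(n+1)` ±1-matrix achieves the Hadamard determinant bound and `n+1 > 2`,
then `4 ∣ n+1`. -/
theorem hadamard_order_dvd_four (n : ℕ) (M : Matrix (Fin (n + 1)) (Fin (n + 1)) ℝ)
    (hM : ∀ i j, M i j = 1 ∨ M i j = -1)
    (hdet : |M.det| = Real.sqrt (n + 1) ^ (n + 1))
    (hn : 2 < n + 1) :
    4 ∣ (n + 1) := by
  have hsq : ∀ i j, M i j * M i j = 1 := by
    intro i j; rcases hM i j with h | h <;> rw [h] <;> ring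
  set G := M * Mᴴ with hGdef
  have hG : G.IsHermitian := isHermitian_mul_conjTranspose_self M
  have hGps : G.PosSemidef := posSemidef_self_mul_conjTranspose M
  -- det G
  have hn0 : (0:ℝ) ≤ (n+1:ℝ) := by positivity
  have hdetG : G.det = ((n:ℝ)+1) ^ (n+1) := by
    rw [hGdef, det_mul, det_conjTranspose]
    have : M.det * star M.det = |M.det| * |M.det| := by
      simp [star_trivial, abs_mul_abs_self]
    rw [this, hdet, ← mul_pow, Real.mul_self_sqrt hn0]
  -- trace G
  have htrG : G.trace = ((n:ℝ)+1) ^ 2 := by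
    rw [hGdef]
    simp only [trace, Matrix.diag, mul_apply, conjTranspose_apply, star_trivial]
    rw [Finset.sum_congr rfl fun i _ => Finset.sum_congr rfl fun j _ => hsq i j]
    simp [Finset.sum_const]; push_cast; ring
  set lam := hG.eigenvalues with hlam
  have hprod : ∏ i, lam i = ((n:ℝ)+1) ^ (n+1) := by
    have h := hG.det_eq_prod_eigenvalues
    rw [hdetG] at h
    exact_mod_cast h.symm
  have hsum : ∑ i, lam i = ((n:ℝ)+1) ^ 2 := by
    have h1 : G.trace = ∑ i, lam i := by
      conv_lhs => rw [hG.spectral_theorem]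
      rw [Unitary.conjStarAlgAut_apply, Matrix.trace_mul_cycle,
        (Matrix.mem_unitaryGroup_iff').mp (hG.eigenvectorUnitary).2, Matrix.one_mul]
      simp [Matrix.trace_diagonal, hlam]
    rw [← h1, htrG]
  have hc : (0:ℝ) < (n:ℝ)+1 := by positivity
  have hnneg : ∀ i, 0 ≤ lam i := fun i => hGps.eigenvalues_nonneg i
  have hpos : ∀ i, 0 < lam i := by
    intro i
    rcases lt_or_eq_of_le (hnneg i) with h | h
    · exact h
    · exfalso
      have : ∏ j, lam j = 0 := Finset.prod_eq_zero (Finset.mem_univ i) h.symm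
      rw [hprod] at this
      exact absurd this (by positivity)
  -- all eigenvalues equal n+1 via AM-GM (log x ≤ x - 1)
  have hall : ∀ i, lam i = (n:ℝ)+1 := by
    set c : ℝ := (n:ℝ)+1 with hcdef
    have hfpos : ∀ i, 0 < lam i / c := fun i => div_pos (hpos i) hc
    have hsumf : ∑ i, (lam i / c - 1) = 0 := by
      rw [Finset.sum_sub_distrib, ← Finset.sum_div, hsum]
      simp [Finset.card_univ]
      field_simp
      ring
    have hsumlog : ∑ i, Real.log (lam i / c) = 0 := by
      rw [← Real.log_prod (fun i _ => (hfpos i).ne')]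
      have hp1 : ∏ i, lam i / c = 1 := by
        rw [Finset.prod_div_distrib, hprod, Finset.prod_const, Finset.card_univ,
          Fintype.card_fin, hcdef]
        exact div_self (by positivity)
      rw [hp1, Real.log_one]
    have hkey : ∀ i ∈ Finset.univ, (0:ℝ) ≤ (lam i / c - 1) - Real.log (lam i / c) := by
      intro i _
      have := Real.log_le_sub_one_of_pos (hfpos i)
      linarith
    have hzero : ∑ i, ((lam i / c - 1) - Real.log (lam i / c)) = 0 := by
      rw [Finset.sum_sub_distrib, hsumf, hsumlog]; ring
    have heach := (Finset.sum_eq_zero_iff_of_nonneg hkey).mp hzero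
    intro i
    have hi := heach i (Finset.mem_univ i)
    by_contra hne
    have hne1 : lam i / c ≠ 1 := by
      intro h
      exact hne (by field_simp at h; linarith)
    have := Real.log_lt_sub_one_of_pos (hfpos i) hne1
    linarith
  -- hence G = (n+1) • 1
  have hGeq : G = ((n:ℝ)+1) • (1 : Matrix (Fin (n+1)) (Fin (n+1)) ℝ) := by
    conv_lhs => rw [hG.spectral_theorem]
    have hd : Matrix.diagonal (RCLike.ofReal ∘ lam) =
        ((n:ℝ)+1) • (1 : Matrix (Fin (n+1)) (Fin (n+1)) ℝ) := by
      rw [show (RCLike.ofReal ∘ lam : Fin (n+1) → ℝ) = fun _ => ((n:ℝ)+1) from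
        funext fun i => by simp [hall i]]
      rw [Matrix.smul_one_eq_diagonal]
    rw [hd, Unitary.conjStarAlgAut_apply, Matrix.mul_smul, Matrix.smul_mul, Matrix.mul_one,
      (Matrix.mem_unitaryGroup_iff).mp (hG.eigenvectorUnitary).2]
  -- orthogonality of distinct rows
  have horth : ∀ i j, i ≠ j → ∑ l, M i l * M j l = 0 := by
    intro i j hij
    have h0 : G i j = 0 := by
      rw [hGeq]
      simp [Matrix.one_apply, hij]
    simpa [hGdef, Matrix.mul_apply, conjTranspose_apply] using h0
  -- pass to integers
  set z : Fin (n+1) → Fin (n+1) → ℤ := fun i j => if M i j = 1 then 1 else -1 with hzdef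
  have hzc : ∀ i j, ((z i j : ℤ) : ℝ) = M i j := by
    intro i j
    rcases hM i j with h | h <;> simp only [hzdef] <;> rw [h] <;> norm_num
  have hz1 : ∀ i j, z i j = 1 ∨ z i j = -1 := by
    intro i j
    rcases hM i j with h | h <;> simp only [hzdef] <;> rw [h] <;> norm_num
  have horthz : ∀ i j, i ≠ j → ∑ l, z i l * z j l = 0 := by
    intro i j hij
    have : ((∑ l, z i l * z j l : ℤ) : ℝ) = 0 := by
      push_cast
      rw [Finset.sum_congr rfl fun l _ => by rw [hzc, hzc]]
      exact horth i j hij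
    exact_mod_cast this
  -- three distinct rows
  have h3 : 3 ≤ n + 1 := hn
  set i0 : Fin (n+1) := ⟨0, by omega⟩
  set i1 : Fin (n+1) := ⟨1, by omega⟩
  set i2 : Fin (n+1) := ⟨2, by omega⟩
  have h01 : i0 ≠ i1 := by simp [i0, i1, Fin.ext_iff]
  have h02 : i0 ≠ i2 := by simp [i0, i2, Fin.ext_iff]
  have h12 : i1 ≠ i2 := by simp [i1, i2, Fin.ext_iff]
  have hS : ∑ l, (z i0 l + z i1 l) * (z i0 l + z i2 l) = (n+1 : ℤ) := by
    have expand : ∀ l, (z i0 l + z i1 l) * (z i0 l + z i2 l)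
        = z i0 l * z i0 l + z i0 l * z i2 l + z i1 l * z i0 l + z i1 l * z i2 l := by
      intro l; ring
    rw [Finset.sum_congr rfl fun l _ => expand l]
    repeat rw [Finset.sum_add_distrib]
    have hsq1 : ∑ l, z i0 l * z i0 l = (n+1 : ℤ) := by
      rw [Finset.sum_congr rfl fun l _ => by
        rcases hz1 i0 l with h | h <;> rw [h] <;> ring_nf]
      simp [Finset.card_univ]
    rw [hsq1, horthz i0 i2 h02, horthz i1 i0 h01.symm, horthz i1 i2 h12]
    ring
  have hdvd : (4:ℤ) ∣ (n+1 : ℤ) := by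
    rw [← hS]
    apply Finset.dvd_sum
    intro l _
    rcases hz1 i0 l with h0 | h0 <;> rcases hz1 i1 l with h1 | h1 <;>
      rcases hz1 i2 l with h2 | h2 <;> rw [h0, h1, h2] <;> decide
  exact_mod_cast hdvd
end

section
/- The maximal entry function χ satisfies super-multiplicativity: χ(n₁ + n₂) ≥ χ(n₁)·χ(n₂), where χ(n) is the maximum over invertible n×n 0/1-matrices A of the largest absolute value of an entry of A⁻¹. -/
open Matrix

/-- `χ(n)`: the maximum, over invertible `n×n` 0/1-matrices `A`, of the largest absolute
value of an entry of `A⁻¹`. -/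
noncomputable def chi (n : ℕ) : ℝ :=
  sSup {x | ∃ A : Matrix (Fin n) (Fin n) ℝ,
    (∀ i j, A i j = 0 ∨ A i j = 1) ∧ A.det ≠ 0 ∧
    x = sSup {y | ∃ i j, y = |A⁻¹ i j|}}

namespace ChiAux

lemma inner_finite {n : ℕ} (M : Matrix (Fin n) (Fin n) ℝ) :
    {y | ∃ i j, y = |M i j|}.Finite := by
  have h : {y | ∃ i j, y = |M i j|} =
      Set.range (fun p : Fin n × Fin n => |M p.1 p.2|) := by
    ext y
    constructor
    · rintro ⟨i, j, rfl⟩; exact ⟨(i, j), rfl⟩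
    · rintro ⟨⟨i, j⟩, rfl⟩; exact ⟨i, j, rfl⟩
  rw [h]
  exact Set.finite_range _

lemma inv_entry_le {n : ℕ} (A : Matrix (Fin n) (Fin n) ℝ)
    (h01 : ∀ i j, A i j = 0 ∨ A i j = 1) (hdet : A.det ≠ 0) (i j : Fin n) :
    |A⁻¹ i j| ≤ (Nat.factorial n : ℝ) := by
  -- the determinant is a nonzero integer, hence has absolute value at least 1
  have hdet1 : (1 : ℝ) ≤ |A.det| := by
    set A₀ : Matrix (Fin n) (Fin n) ℤ := fun i j => if A i j = 1 then 1 else 0 with hA₀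
    have hmap : A = A₀.map (Int.cast : ℤ → ℝ) := by
      funext a b
      rcases h01 a b with h | h <;> simp [hA₀, Matrix.map, Matrix.of_apply, h]
    have hdet' : A.det = ((A₀.det : ℤ) : ℝ) := by
      rw [hmap]; exact ((Int.castRingHom ℝ).map_det A₀).symm
    have hne : A₀.det ≠ 0 := by
      intro h; apply hdet; rw [hdet', h]; simp
    have : (1 : ℤ) ≤ |A₀.det| := Int.one_le_abs hne
    calc (1 : ℝ) = ((1 : ℤ) : ℝ) := by norm_num
      _ ≤ ((|A₀.det| : ℤ) : ℝ) := by exact_mod_cast this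
      _ = |A.det| := by rw [hdet']; push_cast; rfl
  -- the adjugate entries are bounded by n!
  have hadj : |A.adjugate i j| ≤ (Nat.factorial n : ℝ) := by
    rw [Matrix.adjugate_apply]
    have hb : ∀ a b, (AbsoluteValue.abs : AbsoluteValue ℝ ℝ)
        ((A.updateRow j (Pi.single i 1)) a b) ≤ (1 : ℝ) := by
      intro a b
      rw [Matrix.updateRow_apply]
      split_ifs with h
      · rcases eq_or_ne b i with hb | hb <;> simp [hb, Pi.single_apply]
      · rcases h01 a b with h' | h' <;> simp [h']
    have := Matrix.det_le hb
    simpa [Fintype.card_fin] using this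
  have hinv : A⁻¹ i j = (A.det)⁻¹ * A.adjugate i j := by
    rw [Matrix.inv_def, Ring.inverse_eq_inv]; rfl
  rw [hinv, abs_mul, abs_inv]
  have h1 : |A.det|⁻¹ ≤ 1 := by
    rw [inv_le_one_iff₀]; right; exact hdet1
  calc |A.det|⁻¹ * |A.adjugate i j| ≤ 1 * (Nat.factorial n : ℝ) := by
        apply mul_le_mul h1 hadj (abs_nonneg _) (by norm_num)
    _ = (Nat.factorial n : ℝ) := one_mul _

lemma chi_set_bdd (n : ℕ) : BddAbove {x | ∃ A : Matrix (Fin n) (Fin n) ℝ,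
    (∀ i j, A i j = 0 ∨ A i j = 1) ∧ A.det ≠ 0 ∧
    x = sSup {y | ∃ i j, y = |A⁻¹ i j|}} := by
  refine ⟨(Nat.factorial n : ℝ), ?_⟩
  rintro x ⟨A, h01, hdet, rfl⟩
  apply Real.sSup_le
  · rintro y ⟨i, j, rfl⟩
    exact inv_entry_le A h01 hdet i j
  · positivity

lemma chi_nonneg (n : ℕ) : 0 ≤ chi n := by
  apply Real.sSup_nonneg
  rintro x ⟨A, _, _, rfl⟩
  apply Real.sSup_nonneg
  rintro y ⟨i, j, rfl⟩
  exact abs_nonneg _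

lemma chi_zero : chi 0 = 0 := by
  unfold chi
  have h : {x | ∃ A : Matrix (Fin 0) (Fin 0) ℝ,
      (∀ i j, A i j = 0 ∨ A i j = 1) ∧ A.det ≠ 0 ∧
      x = sSup {y | ∃ i j, y = |A⁻¹ i j|}} = {0} := by
    ext x
    constructor
    · rintro ⟨A, _, _, rfl⟩
      have : {y | ∃ i j : Fin 0, y = |A⁻¹ i j|} = (∅ : Set ℝ) :=
        Set.eq_empty_iff_forall_notMem.mpr (by rintro y ⟨i, j, -⟩; exact i.elim0)
      rw [this, Real.sSup_empty]; rfl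
    · rintro rfl
      refine ⟨1, fun i => i.elim0, ?_, ?_⟩
      · rw [Matrix.det_fin_zero]; norm_num
      · have : {y | ∃ i j : Fin 0, y = |(1 : Matrix (Fin 0) (Fin 0) ℝ)⁻¹ i j|}
            = (∅ : Set ℝ) :=
          Set.eq_empty_iff_forall_notMem.mpr (by rintro y ⟨i, j, -⟩; exact i.elim0)
        rw [this, Real.sSup_empty]
  rw [h, csSup_singleton]

/-- The key construction: a block matrix witnessing the product of two inverse entries. -/
lemma key {n₁ n₂ : ℕ} (A : Matrix (Fin n₁) (Fin n₁) ℝ) (B : Matrix (Fin n₂) (Fin n₂) ℝ)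
    (hA01 : ∀ i j, A i j = 0 ∨ A i j = 1) (hAdet : A.det ≠ 0)
    (hB01 : ∀ i j, B i j = 0 ∨ B i j = 1) (hBdet : B.det ≠ 0)
    (p q : Fin n₁) (r s : Fin n₂) :
    |A⁻¹ p q| * |B⁻¹ r s| ≤ chi (n₁ + n₂) := by
  classical
  set E : Matrix (Fin n₂) (Fin n₁) ℝ :=
    Matrix.of (fun i j => if i = s ∧ j = p then (1 : ℝ) else 0) with hE
  set C : Matrix (Fin n₁ ⊕ Fin n₂) (Fin n₁ ⊕ Fin n₂) ℝ := Matrix.fromBlocks A 0 E B with hC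
  set D : Matrix (Fin n₁ ⊕ Fin n₂) (Fin n₁ ⊕ Fin n₂) ℝ :=
    Matrix.fromBlocks A⁻¹ 0 (-(B⁻¹ * E * A⁻¹)) B⁻¹ with hD
  have hAu : IsUnit A.det := isUnit_iff_ne_zero.mpr hAdet
  have hBu : IsUnit B.det := isUnit_iff_ne_zero.mpr hBdet
  have hCD : C * D = 1 := by
    rw [hC, hD, Matrix.fromBlocks_multiply]
    rw [Matrix.mul_nonsing_inv A hAu, Matrix.mul_nonsing_inv B hBu]
    have h3 : E * A⁻¹ + B * -(B⁻¹ * E * A⁻¹) = 0 := by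
      rw [Matrix.mul_neg, ← Matrix.mul_assoc, ← Matrix.mul_assoc,
        Matrix.mul_nonsing_inv B hBu, Matrix.one_mul, add_neg_cancel]
    rw [h3]
    simp [Matrix.fromBlocks_one]
  have hCinv : C⁻¹ = D := Matrix.inv_eq_right_inv hCD
  have hCdet : C.det ≠ 0 := by
    rw [hC, Matrix.det_fromBlocks_zero₁₂]
    exact mul_ne_zero hAdet hBdet
  -- the entry of C⁻¹ in the bottom-left block
  have hentry : C⁻¹ (Sum.inr r) (Sum.inl q) = -(B⁻¹ r s * A⁻¹ p q) := by
    rw [hCinv, hD]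
    simp only [Matrix.fromBlocks_apply₂₁, Matrix.neg_apply, neg_inj]
    rw [Matrix.mul_assoc, Matrix.mul_apply]
    have : ∀ k, (E * A⁻¹) k q = if k = s then A⁻¹ p q else 0 := by
      intro k
      rw [Matrix.mul_apply]
      rcases eq_or_ne k s with hk | hk
      · subst hk
        rw [if_pos rfl, Finset.sum_eq_single p]
        · simp [hE]
        · intro b _ hb; simp [hE, hb]
        · intro h; exact absurd (Finset.mem_univ p) h
      · rw [if_neg hk]
        apply Finset.sum_eq_zero
        intro b _; simp [hE, hk]
    simp only [this, mul_ite, mul_zero]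
    rw [Finset.sum_ite_eq' Finset.univ s (fun k => B⁻¹ r k * A⁻¹ p q)]
    simp
  -- transfer to Fin (n₁ + n₂)
  set e := finSumFinEquiv (m := n₁) (n := n₂)
  set C' : Matrix (Fin (n₁ + n₂)) (Fin (n₁ + n₂)) ℝ := Matrix.reindex e e C with hC'
  have hC'01 : ∀ i j, C' i j = 0 ∨ C' i j = 1 := by
    intro i j
    rw [hC', Matrix.reindex_apply, Matrix.submatrix_apply, hC]
    rcases e.symm i with i' | i' <;> rcases e.symm j with j' | j'
    · exact hA01 i' j'
    · left; rfl
    · rw [Matrix.fromBlocks_apply₂₁, hE]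
      dsimp only [Matrix.of_apply]
      split_ifs
      · right; rfl
      · left; rfl
    · exact hB01 i' j'
  have hC'det : C'.det ≠ 0 := by
    rw [hC', Matrix.det_reindex_self]; exact hCdet
  have hC'inv : C'⁻¹ = Matrix.reindex e e C⁻¹ := by
    rw [hC', Matrix.inv_reindex]
  have hventry : |C'⁻¹ (e (Sum.inr r)) (e (Sum.inl q))| = |A⁻¹ p q| * |B⁻¹ r s| := by
    rw [hC'inv, Matrix.reindex_apply, Matrix.submatrix_apply,
      Equiv.symm_apply_apply, Equiv.symm_apply_apply, hentry, abs_neg, abs_mul, mul_comm]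
  -- now conclude
  have hmem : sSup {y | ∃ i j, y = |C'⁻¹ i j|} ∈
      {x | ∃ A : Matrix (Fin (n₁ + n₂)) (Fin (n₁ + n₂)) ℝ,
        (∀ i j, A i j = 0 ∨ A i j = 1) ∧ A.det ≠ 0 ∧
        x = sSup {y | ∃ i j, y = |A⁻¹ i j|}} := ⟨C', hC'01, hC'det, rfl⟩
  have h1 : |A⁻¹ p q| * |B⁻¹ r s| ≤ sSup {y | ∃ i j, y = |C'⁻¹ i j|} := by
    rw [← hventry]
    exact le_csSup (inner_finite _).bddAbove ⟨_, _, rfl⟩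
  exact h1.trans (le_csSup (chi_set_bdd (n₁ + n₂)) hmem)

end ChiAux

/-- Super-multiplicativity: `χ(n₁ + n₂) ≥ χ(n₁)·χ(n₂)`. -/
theorem chi_supermultiplicative (n₁ n₂ : ℕ) :
    chi n₁ * chi n₂ ≤ chi (n₁ + n₂) := by
  classical
  have hc : 0 ≤ chi (n₁ + n₂) := ChiAux.chi_nonneg _
  rcases Nat.eq_zero_or_pos n₁ with h1 | h1
  · subst h1; rw [ChiAux.chi_zero, zero_mul]; exact hc
  rcases Nat.eq_zero_or_pos n₂ with h2 | h2
  · subst h2; rw [ChiAux.chi_zero, mul_zero]; exact hc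
  haveI : NeZero n₁ := ⟨h1.ne'⟩
  haveI : NeZero n₂ := ⟨h2.ne'⟩
  -- key pointwise bound
  have key2 : ∀ x ∈ {x | ∃ A : Matrix (Fin n₁) (Fin n₁) ℝ,
      (∀ i j, A i j = 0 ∨ A i j = 1) ∧ A.det ≠ 0 ∧
      x = sSup {y | ∃ i j, y = |A⁻¹ i j|}},
      ∀ y ∈ {x | ∃ B : Matrix (Fin n₂) (Fin n₂) ℝ,
      (∀ i j, B i j = 0 ∨ B i j = 1) ∧ B.det ≠ 0 ∧
      x = sSup {y | ∃ i j, y = |B⁻¹ i j|}},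
      x * y ≤ chi (n₁ + n₂) := by
    rintro x ⟨A, hA01, hAdet, rfl⟩ y ⟨B, hB01, hBdet, rfl⟩
    have hAne : {y | ∃ i j, y = |A⁻¹ i j|}.Nonempty := ⟨|A⁻¹ 0 0|, 0, 0, rfl⟩
    have hBne : {y | ∃ i j, y = |B⁻¹ i j|}.Nonempty := ⟨|B⁻¹ 0 0|, 0, 0, rfl⟩
    obtain ⟨p, q, hpq⟩ := hAne.csSup_mem (ChiAux.inner_finite A⁻¹)
    obtain ⟨r, s, hrs⟩ := hBne.csSup_mem (ChiAux.inner_finite B⁻¹)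
    rw [hpq, hrs]
    exact ChiAux.key A B hA01 hAdet hB01 hBdet p q r s
  rcases le_or_gt (chi n₂) 0 with h | h
  · have h0 : chi n₂ = 0 := le_antisymm h (ChiAux.chi_nonneg n₂)
    rw [h0, mul_zero]; exact hc
  · rw [← le_div_iff₀ h]
    apply Real.sSup_le
    · intro x hx
      rw [le_div_iff₀ h]
      rcases le_or_gt x 0 with hx0 | hx0
      · calc x * chi n₂ ≤ 0 * chi n₂ :=
              mul_le_mul_of_nonneg_right hx0 (ChiAux.chi_nonneg n₂)
          _ = 0 := zero_mul _
          _ ≤ chi (n₁ + n₂) := hc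
      · rw [mul_comm, ← le_div_iff₀ hx0]
        apply Real.sSup_le
        · intro y hy
          rw [le_div_iff₀ hx0, mul_comm]
          exact key2 x hx y hy
        · exact div_nonneg hc hx0.le
    · exact div_nonneg hc h.le
end

section
/- In the cut polytope CUT(n) with n ≥ 4, the identity δ(∅) + δ({1,2}) + δ({1,3}) + δ({2,3}) = δ({1}) + δ({2}) + δ({3}) + δ({1,2,3}) holds, where the eight cut vectors involved are pairwise distinct; hence these vertices do not form the vertex set of a 7-dimensional simplex, so CUT(n) is not 4-neighborly. -/
/-- The edge set of the complete graph `K_n`: pairs `(i,j)` with `i < j`. -/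
def Edge (n : ℕ) := {p : Fin n × Fin n // p.1 < p.2}

instance (n : ℕ) : Fintype (Edge n) := Subtype.fintype _

/-- The cut vector `δ(S) ∈ {0,1}^(C(n,2))` of the cut determined by `S ⊆ [n]`:
coordinate `ij` equals `1` iff exactly one of `i`, `j` lies in `S`. -/
def cutVec (n : ℕ) (S : Finset (Fin n)) : Edge n → ℝ :=
  fun p => if (p.1.1 ∈ S ↔ p.1.2 ∈ S) then 0 else 1


/-- The eight cut vectors `δ(∅), δ{1,2}, δ{1,3}, δ{2,3}, δ{1}, δ{2}, δ{3}, δ{1,2,3}`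
of `CUT(n)` (here using the first three elements of `Fin n`). -/
noncomputable def eightCuts (n : ℕ) (hn : 4 ≤ n) : Fin 8 → (Edge n → ℝ) :=
  ![cutVec n ∅,
    cutVec n {⟨0, by omega⟩, ⟨1, by omega⟩},
    cutVec n {⟨0, by omega⟩, ⟨2, by omega⟩},
    cutVec n {⟨1, by omega⟩, ⟨2, by omega⟩},
    cutVec n {⟨0, by omega⟩},
    cutVec n {⟨1, by omega⟩},
    cutVec n {⟨2, by omega⟩},
    cutVec n {⟨0, by omega⟩, ⟨1, by omega⟩, ⟨2, by omega⟩}]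

set_option maxHeartbeats 2000000 in
set_option maxRecDepth 10000 in
/-- In `CUT(n)` with `n ≥ 4`:
`δ(∅) + δ{1,2} + δ{1,3} + δ{2,3} = δ{1} + δ{2} + δ{3} + δ{1,2,3}`, the eight cut vectors
are pairwise distinct, and hence they are affinely dependent, so they do not form the
vertex set of a 7-simplex; thus `CUT(n)` is not 4-neighborly. -/
theorem cut_not_four_neighborly (n : ℕ) (hn : 4 ≤ n) :
    (eightCuts n hn 0 + eightCuts n hn 1 + eightCuts n hn 2 + eightCuts n hn 3 =
      eightCuts n hn 4 + eightCuts n hn 5 + eightCuts n hn 6 + eightCuts n hn 7) ∧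
    Function.Injective (eightCuts n hn) ∧
    ¬ AffineIndependent ℝ (eightCuts n hn) := by
  have h0 : (0 : ℕ) < n := by omega
  have h1 : (1 : ℕ) < n := by omega
  have h2 : (2 : ℕ) < n := by omega
  have h3 : (3 : ℕ) < n := by omega
  have E0 : eightCuts n hn 0 = cutVec n ∅ := rfl
  have E1 : eightCuts n hn 1 = cutVec n {⟨0, h0⟩, ⟨1, h1⟩} := rfl
  have E2 : eightCuts n hn 2 = cutVec n {⟨0, h0⟩, ⟨2, h2⟩} := rfl
  have E3 : eightCuts n hn 3 = cutVec n {⟨1, h1⟩, ⟨2, h2⟩} := rfl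
  have E4 : eightCuts n hn 4 = cutVec n {⟨0, h0⟩} := rfl
  have E5 : eightCuts n hn 5 = cutVec n {⟨1, h1⟩} := rfl
  have E6 : eightCuts n hn 6 = cutVec n {⟨2, h2⟩} := rfl
  have E7 : eightCuts n hn 7 = cutVec n {⟨0, h0⟩, ⟨1, h1⟩, ⟨2, h2⟩} := rfl
  have hsum : eightCuts n hn 0 + eightCuts n hn 1 + eightCuts n hn 2 + eightCuts n hn 3 =
      eightCuts n hn 4 + eightCuts n hn 5 + eightCuts n hn 6 + eightCuts n hn 7 := by
    rw [E0, E1, E2, E3, E4, E5, E6, E7]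
    funext e
    simp only [Pi.add_apply]
    obtain ⟨⟨i, j⟩, hij⟩ := e
    have hij' : i ≠ j := ne_of_lt hij
    simp only [Pi.add_apply, cutVec, Finset.mem_insert, Finset.mem_singleton,
      Finset.notMem_empty]
    by_cases ha : i = (⟨0, h0⟩ : Fin n) <;>
    by_cases hb : i = (⟨1, h1⟩ : Fin n) <;>
    by_cases hc : i = (⟨2, h2⟩ : Fin n) <;>
    by_cases hd : j = (⟨0, h0⟩ : Fin n) <;>
    by_cases he : j = (⟨1, h1⟩ : Fin n) <;>
    by_cases hf : j = (⟨2, h2⟩ : Fin n) <;>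
    simp_all
  refine ⟨hsum, ?_, ?_⟩
  · intro a b hab
    have c01 := congrFun hab ⟨(⟨0, h0⟩, ⟨1, h1⟩), by simp [Fin.lt_def]⟩
    have c02 := congrFun hab ⟨(⟨0, h0⟩, ⟨2, h2⟩), by simp [Fin.lt_def]⟩
    have c12 := congrFun hab ⟨(⟨1, h1⟩, ⟨2, h2⟩), by simp [Fin.lt_def]⟩
    have c03 := congrFun hab ⟨(⟨0, h0⟩, ⟨3, h3⟩), by simp [Fin.lt_def]⟩
    fin_cases a <;> fin_cases b <;>
      first
        | rfl
        | (revert c01 c02 c12 c03; norm_num [eightCuts, Matrix.cons_val_succ', Matrix.cons_val_zero', cutVec,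
            Fin.ext_iff])
  · intro hind
    have key := affineIndependent_iff.1 hind Finset.univ ![1, 1, 1, 1, -1, -1, -1, -1]
      (by norm_num [Fin.sum_univ_succ]) ?_ 0 (Finset.mem_univ _)
    · simp at key
    · have hs : ∑ e : Fin 8, (![1, 1, 1, 1, -1, -1, -1, -1] : Fin 8 → ℝ) e • eightCuts n hn e =
          (eightCuts n hn 0 + eightCuts n hn 1 + eightCuts n hn 2 + eightCuts n hn 3) -
          (eightCuts n hn 4 + eightCuts n hn 5 + eightCuts n hn 6 + eightCuts n hn 7) := by
        simp [Fin.sum_univ_succ]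
        abel
      rw [hs, hsum, sub_self]
end

section
/- The graph of every d-dimensional 0/1-polytope has diameter at most d; that is, any two vertices of a polytope P = conv(V) with V ⊆ {0,1}^d and dim P = d can be connected by a path of at most d edges of P (Naddef's theorem, the Hirsch bound for 0/1-polytopes). -/
open Set

/-- Supporting hyperplane lemma: if `f ≤ c` on `s` and `x ∈ conv s` has `f x = c`,
then `x` is in the hull of the points of `s` where `f = c`. -/
lemma face_hull_subset {E : Type*} [AddCommGroup E] [Module ℝ E]
    (s : Set E) (f : E →ₗ[ℝ] ℝ) (c : ℝ) (hb : ∀ a ∈ s, f a ≤ c)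
    {x : E} (hx : x ∈ convexHull ℝ s) (hfx : f x = c) :
    x ∈ convexHull ℝ {a ∈ s | f a = c} := by
  rw [convexHull_eq] at hx
  obtain ⟨ι, t, w, z, hw0, hw1, hz, rfl⟩ := hx
  have hxm : t.centerMass w z = ∑ i ∈ t, w i • z i := Finset.centerMass_eq_of_sum_1 _ _ hw1
  have hfm : ∑ i ∈ t, w i * f (z i) = c := by
    have := congrArg f hxm
    simpa [map_sum, map_smul, smul_eq_mul, hfx] using this.symm
  have hkey : ∀ i ∈ t, w i * (c - f (z i)) = 0 := by
    rw [← Finset.sum_eq_zero_iff_of_nonneg]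
    · have : ∑ i ∈ t, w i * (c - f (z i)) = (∑ i ∈ t, w i) * c - ∑ i ∈ t, w i * f (z i) := by
        rw [Finset.sum_mul, ← Finset.sum_sub_distrib]; exact Finset.sum_congr rfl (fun i _ => by ring)
      rw [this, hw1, hfm]; ring
    · intro i hi
      have := hb (z i) (hz i hi)
      have := hw0 i hi
      nlinarith
  rw [← Finset.centerMass_filter_ne_zero (w := w)]
  refine Finset.centerMass_mem_convexHull _ (fun i hi => hw0 i (Finset.mem_filter.1 hi).1) ?_ ?_
  · rw [Finset.sum_filter_ne_zero, hw1]; norm_num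
  · intro i hi
    rw [Finset.mem_filter] at hi
    refine ⟨hz i hi.1, ?_⟩
    have := hkey i hi.1
    rcases mul_eq_zero.1 this with h | h
    · exact absurd h hi.2
    · linarith

open Set

lemma dot_self_ne_zero {d : ℕ} {w : Fin d → ℝ} (hw : w ≠ 0) :
    ∑ i, w i * w i ≠ 0 := by
  intro h
  apply hw
  funext i
  have h0 : ∀ j ∈ Finset.univ, (0:ℝ) ≤ w j * w j := fun j _ => mul_self_nonneg _
  have := (Finset.sum_eq_zero_iff_of_nonneg h0).1 h i (Finset.mem_univ i)
  have := mul_self_eq_zero.1 this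
  simpa using this

/-- A linear functional avoiding finitely many nonzero vectors' kernels. -/
lemma exists_generic_functional {d : ℕ} (W : Set (Fin d → ℝ)) (hW : W.Finite)
    (h0 : ∀ w ∈ W, w ≠ 0) :
    ∃ y : Fin d → ℝ, ∀ w ∈ W, ∑ i, y i * w i ≠ 0 := by
  suffices h : ∃ y : Fin d → ℝ, ∀ w ∈ W, w ≠ 0 → ∑ i, y i * w i ≠ 0 by
    obtain ⟨y, hy⟩ := h
    exact ⟨y, fun w hw => hy w hw (h0 w hw)⟩
  clear h0
  refine Set.Finite.induction_on W hW ⟨0, by simp⟩ ?_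
  intro w₀ W' hw₀ hW' ih
  · obtain ⟨y, hy⟩ := ih
    by_cases hw₀0 : w₀ = 0
    · refine ⟨y, ?_⟩
      rintro w (rfl | hw) hwne
      · exact absurd hw₀0 hwne
      · exact hy w hw hwne
    by_cases hc : ∑ i, y i * w₀ i ≠ 0
    · refine ⟨y, ?_⟩
      rintro w (rfl | hw) hwne
      · exact hc
      · exact hy w hw hwne
    · -- perturb y by ε • w₀
      set bad : Set ℝ := (fun w => -(∑ i, y i * w i) / (∑ i, w₀ i * w i)) '' insert w₀ W' ∪ {0} with hbad
      have hbadfin : bad.Finite := ((hW'.insert w₀).image _).union (finite_singleton 0)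
      obtain ⟨ε, hε⟩ := hbadfin.exists_notMem
      refine ⟨y + ε • w₀, ?_⟩
      have hεne : ε ≠ 0 := by
        intro h; exact hε (by rw [h]; exact Set.mem_union_right _ rfl)
      intro w hw hwne
      have hexp : ∑ i, (y + ε • w₀) i * w i = (∑ i, y i * w i) + ε * ∑ i, w₀ i * w i := by
        rw [Finset.mul_sum, ← Finset.sum_add_distrib]
        congr 1; funext i; simp [add_mul]; ring
      rw [hexp]
      by_cases hd : ∑ i, w₀ i * w i = 0
      · rw [hd, mul_zero, add_zero]
        rcases hw with rfl | hw
        · exact absurd hd (dot_self_ne_zero hwne)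
        · exact hy w hw hwne
      · intro hz
        apply hε
        refine Set.mem_union_left _ ⟨w, hw, ?_⟩
        field_simp
        linarith
-- helpers
open Set in
lemma extremePoints_mono_subset {E : Type*} [AddCommGroup E] [Module ℝ E]
    {A B : Set E} {x : E} (hx : x ∈ Set.extremePoints ℝ A) (hxB : x ∈ B) (hBA : B ⊆ A) :
    x ∈ Set.extremePoints ℝ B :=
  ⟨hxB, fun x₁ h₁ x₂ h₂ h => hx.2 (hBA h₁) (hBA h₂) h⟩

open Set in
lemma extreme_point_not_mem_hull_diff {E : Type*} [AddCommGroup E] [Module ℝ E]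
    {s : Set E} {x : E} (hx : x ∈ Set.extremePoints ℝ (convexHull ℝ s)) :
    x ∉ convexHull ℝ (s \ {x}) := by
  intro hmem
  have hconv : Convex ℝ (convexHull ℝ s \ {x}) :=
    ((convex_convexHull ℝ s).mem_extremePoints_iff_convex_diff.1 hx).2
  have hsub : s \ {x} ⊆ convexHull ℝ s \ {x} := fun a ha =>
    ⟨subset_convexHull ℝ s ha.1, ha.2⟩
  have := convexHull_min hsub hconv hmem
  exact this.2 rfl

open Set in
lemma isExtreme_of_extremePoints_mem {E : Type*} [AddCommGroup E] [Module ℝ E]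
    {A B : Set E} (hAB : IsExtreme ℝ A B) {x : E} (hx : x ∈ Set.extremePoints ℝ B) :
    x ∈ Set.extremePoints ℝ A :=
  hAB.extremePoints_subset_extremePoints hx
set_option maxHeartbeats 1000000 in
open Set in
lemma exists_edge {d : ℕ} (s : Set (Fin d → ℝ)) (hs : s.Finite)
    {u : Fin d → ℝ} (hu : u ∈ s) (hnot : u ∉ convexHull ℝ (s \ {u}))
    {v : Fin d → ℝ} (hv : v ∈ s) (hvu : v ≠ u) :
    ∃ u' ∈ s, u' ≠ u ∧ IsExtreme ℝ (convexHull ℝ s) (segment ℝ u u') ∧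
      u' ∈ Set.extremePoints ℝ (convexHull ℝ s) := by
  classical
  set B : Set (Fin d → ℝ) := s \ {u} with hBdef
  have hBfin : B.Finite := hs.diff
  have hvB : v ∈ B := ⟨hv, hvu⟩
  have hBs : B ⊆ s := diff_subset
  -- separation
  obtain ⟨q, c, hq1, hq2⟩ := geometric_hahn_banach_closed_point
    (convex_convexHull ℝ B) (hBfin.isCompact_convexHull (𝕜 := ℝ)).isClosed hnot
  set p : (Fin d → ℝ) → ℝ := fun b => q u - q b with hpdef
  have hp : ∀ b ∈ B, 0 < p b := by
    intro b hb
    have := hq1 b (subset_convexHull ℝ B hb)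
    simp only [hpdef]; linarith
  -- generic functional
  set W : Set (Fin d → ℝ) :=
    ((fun b => b - u) '' B) ∪
      {w | (∃ b ∈ B, ∃ b' ∈ B, w = p b' • (b - u) - p b • (b' - u)) ∧ w ≠ 0} with hWdef
  have hWfin : W.Finite := by
    refine (hBfin.image _).union (Set.Finite.subset
      (Set.Finite.image2 (fun b b' => p b' • (b - u) - p b • (b' - u)) hBfin hBfin) ?_)
    rintro w ⟨⟨b, hb, b', hb', rfl⟩, -⟩
    exact Set.mem_image2_of_mem hb hb'
  have hW0 : ∀ w ∈ W, w ≠ 0 := by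
    rintro w (⟨b, hb, rfl⟩ | ⟨-, h⟩)
    · exact sub_ne_zero.2 hb.2
    · exact h
  obtain ⟨y, hy⟩ := exists_generic_functional W hWfin hW0
  set G : (Fin d → ℝ) →ₗ[ℝ] ℝ :=
    { toFun := fun x => ∑ i, y i * x i
      map_add' := by intro a b; simp [mul_add, Finset.sum_add_distrib]
      map_smul' := by
        intro m x
        simp only [Pi.smul_apply, smul_eq_mul, RingHom.id_apply, Finset.mul_sum]
        congr 1; funext i; ring } with hGdef
  have hGW : ∀ w ∈ W, G w ≠ 0 := fun w hw => hy w hw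
  -- sign normalization
  obtain ⟨g, hgW, b₁, hb₁B, hb₁pos⟩ :
      ∃ g : (Fin d → ℝ) →ₗ[ℝ] ℝ, (∀ w ∈ W, g w ≠ 0) ∧ ∃ b ∈ B, 0 < g (b - u) := by
    by_cases hcase : ∃ b ∈ B, 0 < G (b - u)
    · exact ⟨G, hGW, hcase⟩
    · push_neg at hcase
      refine ⟨-G, fun w hw => by simpa using hGW w hw, v, hvB, ?_⟩
      have h1 : G (v - u) ≠ 0 := hGW _ (Set.mem_union_left _ ⟨v, hvB, rfl⟩)
      have h2 := hcase v hvB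
      simp only [LinearMap.neg_apply]
      rcases lt_or_eq_of_le h2 with h | h
      · linarith
      · exact absurd h h1
  -- the tilt parameter
  set T : Finset (Fin d → ℝ) := hBfin.toFinset with hTdef
  have hTne : T.Nonempty := ⟨v, hBfin.mem_toFinset.2 hvB⟩
  set r : (Fin d → ℝ) → ℝ := fun b => g (b - u) / p b with hrdef
  set ts : ℝ := T.sup' hTne r with htsdef
  have hts_ge : ∀ b ∈ B, r b ≤ ts := fun b hb =>
    Finset.le_sup' r (hBfin.mem_toFinset.2 hb)
  have htspos : 0 < ts :=
    lt_of_lt_of_le (div_pos hb₁pos (hp b₁ hb₁B)) (hts_ge b₁ hb₁B)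
  set f : (Fin d → ℝ) →ₗ[ℝ] ℝ := g + ts • (q : (Fin d → ℝ) →ₗ[ℝ] ℝ) with hfdef
  have hfeval : ∀ x, f x = g x + ts * q x := by
    intro x; simp [hfdef]
  set M : ℝ := f u with hMdef
  have hrb : ∀ b ∈ B, g (b - u) = r b * p b := by
    intro b hb
    have h1 : r b = g (b - u) / p b := rfl
    rw [h1, div_mul_cancel₀ _ (hp b hb).ne']
  have hkey : ∀ b ∈ B, M - f b = p b * (ts - r b) := by
    intro b hb
    have hfu : M - f b = -(g (b - u)) + ts * p b := by
      have hgb : g u - g b = -(g (b - u)) := by rw [map_sub]; ring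
      have hqq : p b = q u - q b := rfl
      rw [hMdef, hfeval, hfeval, hqq]
      linarith [hgb]
    rw [hfu, hrb b hb]
    ring
  have hle : ∀ a ∈ s, f a ≤ M := by
    intro a ha
    rcases eq_or_ne a u with rfl | hne
    · exact le_of_eq rfl
    · have hb : a ∈ B := ⟨ha, hne⟩
      have := hkey a hb
      have := hts_ge a hb
      have := hp a hb
      nlinarith
  have hfP : ∀ x ∈ convexHull ℝ s, f x ≤ M :=
    fun x hx => convexHull_min hle (convex_halfSpace_le f.isLinear M) hx
  -- the tied set lies on a ray
  obtain ⟨bs, hbsT, hbs_eq⟩ := Finset.exists_mem_eq_sup' hTne r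
  have hbsB : bs ∈ B := hBfin.mem_toFinset.1 hbsT
  have hfM_of : ∀ b ∈ B, f b = M ↔ r b = ts := by
    intro b hb
    have := hkey b hb
    have hpb := hp b hb
    constructor <;> intro h
    · have : p b * (ts - r b) = 0 := by linarith
      rcases mul_eq_zero.1 this with h' | h'
      · linarith
      · linarith
    · nlinarith
  have hbsf : f bs = M := (hfM_of bs hbsB).2 hbs_eq.symm
  have hgb : ∀ b ∈ B, f b = M → g (b - u) = ts * p b := by
    intro b hb hfb
    have hr : r b = ts := (hfM_of b hb).1 hfb
    rw [hrb b hb, hr, mul_comm]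
  have hray : ∀ b ∈ B, f b = M → b - u = (p b / p bs) • (bs - u) := by
    intro b hb hfb
    have hw : p bs • (b - u) - p b • (bs - u) = 0 := by
      by_contra hne
      have hmem : p bs • (b - u) - p b • (bs - u) ∈ W :=
        Set.mem_union_right _ ⟨⟨b, hb, bs, hbsB, rfl⟩, hne⟩
      have := hgW _ hmem
      apply this
      rw [map_sub, map_smul, map_smul, hgb b hb hfb, hgb bs hbsB hbsf]
      simp [smul_eq_mul]; ring
    have hpbs := (hp bs hbsB).ne'
    have : p bs • (b - u) = p b • (bs - u) := sub_eq_zero.1 hw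
    calc b - u = (p bs)⁻¹ • (p bs • (b - u)) := by rw [smul_smul, inv_mul_cancel₀ hpbs, one_smul]
    _ = (p bs)⁻¹ • (p b • (bs - u)) := by rw [this]
    _ = (p b / p bs) • (bs - u) := by rw [smul_smul, div_eq_inv_mul]
  -- pick u' the farthest tied point
  set κ : (Fin d → ℝ) → ℝ := fun b => p b / p bs with hκdef
  set T'' : Finset (Fin d → ℝ) := T.filter (fun b => f b = M) with hT''def
  have hT''ne : T''.Nonempty := ⟨bs, Finset.mem_filter.2 ⟨hbsT, hbsf⟩⟩
  obtain ⟨u', hu'T'', hu'_eq⟩ := Finset.exists_mem_eq_sup' hT''ne κ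
  have hu'B : u' ∈ B := hBfin.mem_toFinset.1 (Finset.mem_filter.1 hu'T'').1
  have hu'f : f u' = M := (Finset.mem_filter.1 hu'T'').2
  have hu's : u' ∈ s := hBs hu'B
  have hu'ne : u' ≠ u := hu'B.2
  have hκmax : ∀ b ∈ B, f b = M → κ b ≤ κ u' := by
    intro b hb hfb
    rw [← hu'_eq]
    exact Finset.le_sup' κ (Finset.mem_filter.2 ⟨hBfin.mem_toFinset.2 hb, hfb⟩)
  have hκpos : ∀ b ∈ B, 0 < κ b := fun b hb => div_pos (hp b hb) (hp bs hbsB)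
  have hκu' : 0 < κ u' := hκpos u' hu'B
  -- tied points lie in segment u u'
  have hbmem : ∀ b ∈ B, f b = M → b ∈ segment ℝ u u' := by
    intro b hb hfb
    set θ : ℝ := κ b / κ u' with hθdef
    have hθpos : 0 < θ := div_pos (hκpos b hb) hκu'
    have hθle : θ ≤ 1 := by
      rw [hθdef, div_le_one hκu']
      exact hκmax b hb hfb
    refine ⟨1 - θ, θ, by linarith, le_of_lt hθpos, by ring, ?_⟩
    have h1 : b = u + κ b • (bs - u) := by
      have := hray b hb hfb
      rw [← this]; abel
    have h2 : u' = u + κ u' • (bs - u) := by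
      have := hray u' hu'B hu'f
      rw [← this]; abel
    have hθκ : θ * κ u' = κ b := div_mul_cancel₀ _ hκu'.ne'
    rw [h1, h2, smul_add, smul_smul, hθκ]
    module
  have hsegsub : segment ℝ u u' ⊆ convexHull ℝ s :=
    (convex_convexHull ℝ s).segment_subset (subset_convexHull ℝ s hu) (subset_convexHull ℝ s hu's)
  have hfseg : ∀ x ∈ segment ℝ u u', f x = M := by
    rintro x ⟨a, b, ha, hb, hab, rfl⟩
    rw [map_add, map_smul, map_smul, smul_eq_mul, smul_eq_mul, hu'f, ← hMdef]
    linear_combination M * hab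
  have hface : ∀ x ∈ convexHull ℝ s, f x = M → x ∈ segment ℝ u u' := by
    intro x hx hfx
    have hx' := face_hull_subset s f M hle hx hfx
    have hsub : {a ∈ s | f a = M} ⊆ segment ℝ u u' := by
      rintro a ⟨ha, hfa⟩
      rcases eq_or_ne a u with rfl | hne
      · exact left_mem_segment ℝ _ _
      · exact hbmem a ⟨ha, hne⟩ hfa
    exact convexHull_min hsub (convex_segment u u') hx'
  have hext : IsExtreme ℝ (convexHull ℝ s) (segment ℝ u u') := by
    refine ⟨hsegsub, ?_⟩
    intro x₁ hx₁ x₂ hx₂ x hxseg hxopen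
    obtain ⟨a, b, ha, hb, hab, rfl⟩ := hxopen
    have hfx : f (a • x₁ + b • x₂) = M := hfseg _ hxseg
    rw [map_add, map_smul, map_smul, smul_eq_mul, smul_eq_mul] at hfx
    have h₁ := hfP x₁ hx₁
    have h₂ := hfP x₂ hx₂
    have e1 : a * f x₁ ≤ a * M := mul_le_mul_of_nonneg_left h₁ ha.le
    have e2 : b * f x₂ ≤ b * M := mul_le_mul_of_nonneg_left h₂ hb.le
    have esum : a * M + b * M = M := by linear_combination M * hab
    have hf1 : f x₁ = M := by
      by_contra hne
      have : a * f x₁ < a * M := mul_lt_mul_of_pos_left (lt_of_le_of_ne h₁ hne) ha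
      linarith
    have hf2 : f x₂ = M := by
      by_contra hne
      have : b * f x₂ < b * M := mul_lt_mul_of_pos_left (lt_of_le_of_ne h₂ hne) hb
      linarith
    exact hface x₁ hx₁ hf1
  -- u' is an extreme point
  have hqu' : q u' < q u := by
    have := hq1 u' (subset_convexHull ℝ B hu'B)
    linarith
  have hqseg : ∀ x ∈ segment ℝ u u', q u' ≤ q x ∧ (q x = q u' → x = u') := by
    rintro x ⟨a, b, ha, hb, hab, rfl⟩
    have hqx : q (a • u + b • u') = a * q u + b * q u' := by
      simp [smul_eq_mul]
    have e2 : a * q u' + b * q u' = q u' := by linear_combination (q u') * hab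
    constructor
    · rw [hqx]
      have e : a * q u' ≤ a * q u := mul_le_mul_of_nonneg_left hqu'.le ha
      linarith
    · intro hx
      rw [hqx] at hx
      have key : a * (q u - q u') = 0 := by linear_combination hx - e2
      have ha0 : a = 0 := by
        rcases mul_eq_zero.1 key with h | h
        · exact h
        · linarith
      have hb1 : b = 1 := by linarith
      rw [ha0, hb1, zero_smul, one_smul, zero_add]
  have hu'ext : u' ∈ Set.extremePoints ℝ (convexHull ℝ s) := by
    refine ⟨subset_convexHull ℝ s hu's, ?_⟩
    intro x₁ hx₁ x₂ hx₂ hopen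
    have hu'seg : u' ∈ segment ℝ u u' := right_mem_segment ℝ _ _
    obtain ⟨hx₁seg, hx₂seg⟩ : x₁ ∈ segment ℝ u u' ∧ x₂ ∈ segment ℝ u u' :=
      ⟨hext.2 hx₁ hx₂ hu'seg hopen, hext.2 hx₂ hx₁ hu'seg (openSegment_symm ℝ x₁ x₂ ▸ hopen)⟩
    obtain ⟨a, b, ha, hb, hab, heq⟩ := hopen
    have hq1' := hqseg x₁ hx₁seg
    have hq2' := hqseg x₂ hx₂seg
    have hqsum : a * q x₁ + b * q x₂ = q u' := by
      rw [← heq]; simp [smul_eq_mul]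
    have e1 : a * q u' ≤ a * q x₁ := mul_le_mul_of_nonneg_left hq1'.1 ha.le
    have e2 : b * q u' ≤ b * q x₂ := mul_le_mul_of_nonneg_left hq2'.1 hb.le
    have esum : a * q u' + b * q u' = q u' := by linear_combination (q u') * hab
    have hqx₁ : q x₁ = q u' := by
      by_contra hne
      have hlt : q u' < q x₁ := lt_of_le_of_ne hq1'.1 (Ne.symm hne)
      have : a * q u' < a * q x₁ := mul_lt_mul_of_pos_left hlt ha
      linarith
    have hqx₂ : q x₂ = q u' := by
      by_contra hne
      have hlt : q u' < q x₂ := lt_of_le_of_ne hq2'.1 (Ne.symm hne)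
      have : b * q u' < b * q x₂ := mul_lt_mul_of_pos_left hlt hb
      linarith
    exact hq1'.2 hqx₁
  exact ⟨u', hu's, hu'ne, hext, hu'ext⟩
lemma two01 {a b c : ℝ} (h1 : a = 0 ∨ a = 1) (h2 : b = 0 ∨ b = 1) (h3 : c = 0 ∨ c = 1)
    (hac : a ≠ c) (hbc : b ≠ c) : a = b := by
  rcases h1 with rfl | rfl <;> rcases h2 with rfl | rfl <;> rcases h3 with rfl | rfl <;>
    first | rfl | (exfalso; exact hac rfl) | (exfalso; exact hbc rfl) | norm_num at *

open Set in
lemma hull_subset_box {d : ℕ} (V : Set (Fin d → ℝ))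
    (hV : ∀ x ∈ V, ∀ i, x i = 0 ∨ x i = 1) :
    convexHull ℝ V ⊆ {x | ∀ i, 0 ≤ x i ∧ x i ≤ 1} := by
  apply convexHull_min
  · intro a ha i
    rcases hV a ha i with h | h <;> simp [h]
  · intro x hx y hy a b ha hb hab i
    obtain ⟨hx0, hx1⟩ := hx i
    obtain ⟨hy0, hy1⟩ := hy i
    have hev : (a • x + b • y) i = a * x i + b * y i := rfl
    constructor
    · rw [hev]; nlinarith
    · rw [hev]; nlinarith

open Set in
lemma hull_coord_faces {d : ℕ} (V : Set (Fin d → ℝ))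
    (hV : ∀ x ∈ V, ∀ i, x i = 0 ∨ x i = 1)
    {u : Fin d → ℝ} (hu : u ∈ V) (T : Finset (Fin d)) :
    ∀ x ∈ convexHull ℝ V, (∀ i ∈ T, x i = u i) →
      x ∈ convexHull ℝ {a ∈ V | ∀ i ∈ T, a i = u i} := by
  classical
  induction T using Finset.induction_on with
  | empty =>
    intro x hx _
    refine convexHull_mono ?_ hx
    intro a ha; exact ⟨ha, by simp⟩
  | @insert j T hjT ih =>
    intro x hx hxT
    have hx' := ih x hx (fun i hi => hxT i (Finset.mem_insert_of_mem hi))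
    have hxj : x j = u j := hxT j (Finset.mem_insert_self _ _)
    set s : Set (Fin d → ℝ) := {a ∈ V | ∀ i ∈ T, a i = u i} with hsdef
    have hmono : ∀ t : Set (Fin d → ℝ), t ⊆ {a ∈ V | ∀ i ∈ insert j T, a i = u i} →
        convexHull ℝ t ⊆ convexHull ℝ {a ∈ V | ∀ i ∈ insert j T, a i = u i} :=
      fun t ht => convexHull_mono ht
    rcases hV u hu j with h0 | h1
    · have hres := face_hull_subset s (-(LinearMap.proj j : (Fin d → ℝ) →ₗ[ℝ] ℝ)) 0
        (fun a ha => by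
          rcases hV a ha.1 j with h | h <;>
            simp [LinearMap.proj, h])
        hx' (by simp [LinearMap.proj, hxj, h0])
      refine hmono _ ?_ hres
      rintro a ⟨⟨haV, haT⟩, haj⟩
      refine ⟨haV, ?_⟩
      intro i hi
      rcases Finset.mem_insert.1 hi with rfl | hi
      · simp only [LinearMap.neg_apply, LinearMap.proj_apply, neg_eq_zero] at haj
        rw [haj, h0]
      · exact haT i hi
    · have hres := face_hull_subset s (LinearMap.proj j : (Fin d → ℝ) →ₗ[ℝ] ℝ) 1
        (fun a ha => by
          rcases hV a ha.1 j with h | h <;>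
            simp [LinearMap.proj, h])
        hx' (by simp [LinearMap.proj, hxj, h1])
      refine hmono _ ?_ hres
      rintro a ⟨⟨haV, haT⟩, haj⟩
      refine ⟨haV, ?_⟩
      intro i hi
      rcases Finset.mem_insert.1 hi with rfl | hi
      · simp only [LinearMap.proj_apply] at haj
        rw [haj, h1]
      · exact haT i hi

open Set in
lemma mem_face_hull {d : ℕ} (V : Set (Fin d → ℝ))
    (hV : ∀ x ∈ V, ∀ i, x i = 0 ∨ x i = 1)
    {u : Fin d → ℝ} (hu : u ∈ V) (S : Finset (Fin d)) :
    ∀ x ∈ convexHull ℝ V, (∀ i ∉ S, x i = u i) →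
      x ∈ convexHull ℝ {a ∈ V | ∀ i ∉ S, a i = u i} := by
  classical
  intro x hx hxS
  have h := hull_coord_faces V hV hu Sᶜ x hx (fun i hi => hxS i (Finset.mem_compl.1 hi))
  refine convexHull_mono ?_ h
  rintro a ⟨haV, haT⟩
  exact ⟨haV, fun i hi => haT i (Finset.mem_compl.2 hi)⟩

open Set in
lemma face_coords {d : ℕ} (V : Set (Fin d → ℝ))
    {u : Fin d → ℝ} (S : Finset (Fin d)) :
    ∀ x ∈ convexHull ℝ {a ∈ V | ∀ i ∉ S, a i = u i}, ∀ i ∉ S, x i = u i := by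
  intro x hx i hi
  have hsub : convexHull ℝ {a ∈ V | ∀ i ∉ S, a i = u i} ⊆ {x | x i = u i} := by
    apply convexHull_min
    · rintro a ⟨-, ha⟩; exact ha i hi
    · intro x hx y hy a b _ _ hab
      show (a • x + b • y) i = u i
      have hev : (a • x + b • y) i = a * x i + b * y i := rfl
      rw [hev, hx, hy]
      linear_combination (u i) * hab
  exact hsub hx

open Set in
lemma face_isExtreme {d : ℕ} (V : Set (Fin d → ℝ))
    (hV : ∀ x ∈ V, ∀ i, x i = 0 ∨ x i = 1)
    {u : Fin d → ℝ} (hu : u ∈ V) (S : Finset (Fin d)) :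
    IsExtreme ℝ (convexHull ℝ V) (convexHull ℝ {a ∈ V | ∀ i ∉ S, a i = u i}) := by
  classical
  have hsub : convexHull ℝ {a ∈ V | ∀ i ∉ S, a i = u i} ⊆ convexHull ℝ V :=
    convexHull_mono (fun a ha => ha.1)
  refine ⟨hsub, ?_⟩
  intro x₁ hx₁ x₂ hx₂ x hxF hxopen
  obtain ⟨a, b, ha, hb, hab, rfl⟩ := hxopen
  have hbox := hull_subset_box V hV
  have hcoords : ∀ i ∉ S, x₁ i = u i ∧ x₂ i = u i := by
    intro i hi
    have hzi : a * x₁ i + b * x₂ i = u i := by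
      have := face_coords V S _ hxF i hi
      rwa [show (a • x₁ + b • x₂) i = a * x₁ i + b * x₂ i from rfl] at this
    obtain ⟨h10, h11⟩ := hbox hx₁ i
    obtain ⟨h20, h21⟩ := hbox hx₂ i
    rcases hV u hu i with h | h
    · rw [h] at hzi ⊢
      have t1 : 0 ≤ a * x₁ i := mul_nonneg ha.le h10
      have t2 : 0 ≤ b * x₂ i := mul_nonneg hb.le h20
      have e1 : a * x₁ i = 0 := by linarith
      have e2 : b * x₂ i = 0 := by linarith
      constructor
      · rcases mul_eq_zero.1 e1 with h' | h'
        · exact absurd h' ha.ne'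
        · exact h'
      · rcases mul_eq_zero.1 e2 with h' | h'
        · exact absurd h' hb.ne'
        · exact h'
    · rw [h] at hzi ⊢
      have t1 : 0 ≤ a * (1 - x₁ i) := mul_nonneg ha.le (by linarith)
      have t2 : 0 ≤ b * (1 - x₂ i) := mul_nonneg hb.le (by linarith)
      have hsum : a * (1 - x₁ i) + b * (1 - x₂ i) = 0 := by
        have : a * 1 + b * 1 = 1 := by linarith
        nlinarith [hzi]
      have e1 : a * (1 - x₁ i) = 0 := by linarith
      have e2 : b * (1 - x₂ i) = 0 := by linarith
      constructor
      · rcases mul_eq_zero.1 e1 with h' | h'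
        · exact absurd h' ha.ne'
        · linarith
      · rcases mul_eq_zero.1 e2 with h' | h'
        · exact absurd h' hb.ne'
        · linarith
  exact mem_face_hull V hV hu S x₁ hx₁ (fun i hi => (hcoords i hi).1)
open Set in
lemma naddef_aux {d : ℕ} (V : Set (Fin d → ℝ))
    (hV : ∀ x ∈ V, ∀ i, x i = 0 ∨ x i = 1) :
    ∀ (n : ℕ) (S : Finset (Fin d)), S.card ≤ n → ∀ (u v : Fin d → ℝ),
      u ∈ Set.extremePoints ℝ (convexHull ℝ V) →
      v ∈ Set.extremePoints ℝ (convexHull ℝ V) →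
      (∀ i ∉ S, u i = v i) →
      ∃ k, k ≤ S.card ∧ ∃ w : Fin (k + 1) → (Fin d → ℝ),
        w 0 = u ∧ w (Fin.last k) = v ∧
        (∀ i, w i ∈ Set.extremePoints ℝ (convexHull ℝ V)) ∧
        (∀ i : Fin k, w i.castSucc ≠ w i.succ ∧
          IsExtreme ℝ (convexHull ℝ V) (segment ℝ (w i.castSucc) (w i.succ))) := by
  classical
  intro n
  induction n with
  | zero =>
    intro S hS u v hu hv hagree
    have hSempty : S = ∅ := Finset.card_eq_zero.1 (Nat.le_zero.1 hS)
    have huv : u = v := by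
      funext i
      exact hagree i (by simp [hSempty])
    refine ⟨0, Nat.zero_le _, fun _ => u, rfl, huv, fun _ => hu, fun i => i.elim0⟩
  | succ n ih =>
    intro S hS u v hu hv hagree
    by_cases huv : u = v
    · exact ⟨0, Nat.zero_le _, fun _ => u, rfl, huv, fun _ => hu, fun i => i.elim0⟩
    -- u ≠ v
    have hVfin : V.Finite := by
      refine Set.Finite.subset (Set.Finite.pi (fun _ : Fin d => (Set.finite_singleton (0:ℝ)).insert 1)) ?_
      intro x hx
      rw [Set.mem_univ_pi]
      intro i
      rcases hV x hx i with h | h <;> simp [h]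
    have huV : u ∈ V := extremePoints_convexHull_subset hu
    have hvV : v ∈ V := extremePoints_convexHull_subset hv
    obtain ⟨j₀, hj₀⟩ : ∃ j, u j ≠ v j := by
      by_contra h
      push_neg at h
      exact huv (funext h)
    have hj₀S : j₀ ∈ S := by
      by_contra h
      exact hj₀ (hagree j₀ h)
    have hScard : 1 ≤ S.card := Finset.card_pos.2 ⟨j₀, hj₀S⟩
    by_cases hA : ∃ i ∈ S, u i = v i
    · obtain ⟨i, hiS, hieq⟩ := hA
      have hagree' : ∀ i' ∉ S.erase i, u i' = v i' := by
        intro i' hi'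
        by_cases h : i' = i
        · rw [h]; exact hieq
        · refine hagree i' (fun hmem => hi' (Finset.mem_erase.2 ⟨h, hmem⟩))
      have hcard' : (S.erase i).card ≤ n := by
        rw [Finset.card_erase_of_mem hiS]
        omega
      obtain ⟨k, hk, w, hw⟩ := ih (S.erase i) hcard' u v hu hv hagree'
      refine ⟨k, ?_, w, hw⟩
      calc k ≤ (S.erase i).card := hk
        _ ≤ S.card := Finset.card_erase_le
    · push_neg at hA
      set VS : Set (Fin d → ℝ) := {a ∈ V | ∀ i ∉ S, a i = u i} with hVSdef
      have hVSsub : VS ⊆ V := fun a ha => ha.1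
      have huVS : u ∈ VS := ⟨huV, fun _ _ => rfl⟩
      have hvVS : v ∈ VS := ⟨hvV, fun i hi => (hagree i hi).symm⟩
      have huext' : u ∈ Set.extremePoints ℝ (convexHull ℝ VS) :=
        extremePoints_mono_subset hu (subset_convexHull ℝ VS huVS) (convexHull_mono hVSsub)
      have hnot : u ∉ convexHull ℝ (VS \ {u}) := extreme_point_not_mem_hull_diff huext'
      obtain ⟨u', hu'VS, hu'ne, hseg, hu'ext⟩ :=
        exists_edge VS (hVfin.subset hVSsub) huVS hnot hvVS (Ne.symm huv)
      have hfaceext : IsExtreme ℝ (convexHull ℝ V) (convexHull ℝ VS) :=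
        face_isExtreme V hV huV S
      have hsegP : IsExtreme ℝ (convexHull ℝ V) (segment ℝ u u') := hfaceext.trans hseg
      have hu'P : u' ∈ Set.extremePoints ℝ (convexHull ℝ V) :=
        hfaceext.extremePoints_subset_extremePoints hu'ext
      obtain ⟨j, hj⟩ : ∃ j, u' j ≠ u j := by
        by_contra h
        push_neg at h
        exact hu'ne (funext h)
      have hjS : j ∈ S := by
        by_contra h
        exact hj (hu'VS.2 j h)
      have hu'j : u' j = v j :=
        two01 (hV u' (hVSsub hu'VS) j) (hV v hvV j) (hV u huV j) hj (Ne.symm (hA j hjS))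
      have hagree'' : ∀ i ∉ S.erase j, u' i = v i := by
        intro i hi
        by_cases h : i = j
        · rw [h]; exact hu'j
        · have hiS : i ∉ S := fun hmem => hi (Finset.mem_erase.2 ⟨h, hmem⟩)
          rw [hu'VS.2 i hiS]
          exact hagree i hiS
      have hcard'' : (S.erase j).card ≤ n := by
        rw [Finset.card_erase_of_mem hjS]
        omega
      obtain ⟨k', hk', w', hw'0, hw'last, hw'ext, hw'edge⟩ :=
        ih (S.erase j) hcard'' u' v hu'P hv hagree''
      refine ⟨k' + 1, ?_, Fin.cons u w', ?_, ?_, ?_, ?_⟩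
      · have : (S.erase j).card = S.card - 1 := Finset.card_erase_of_mem hjS
        omega
      · simp
      · rw [← Fin.succ_last, Fin.cons_succ, hw'last]
      · intro i
        refine Fin.cases ?_ ?_ i
        · simpa using hu
        · intro i'
          simpa using hw'ext i'
      · intro i
        refine Fin.cases ?_ ?_ i
        · constructor
          · simpa [Fin.castSucc_zero, Fin.cons_zero, Fin.cons_succ, hw'0] using (Ne.symm hu'ne)
          · simpa [Fin.castSucc_zero, Fin.cons_zero, Fin.cons_succ, hw'0] using hsegP
        · intro i'
          constructor
          · have := (hw'edge i').1
            simpa [← Fin.succ_castSucc, Fin.cons_succ] using this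
          · have := (hw'edge i').2
            simpa [← Fin.succ_castSucc, Fin.cons_succ] using this

/-- Naddef's theorem (the Hirsch bound for 0/1-polytopes): any two vertices of a
`d`-dimensional 0/1-polytope `P = conv V`, `V ⊆ {0,1}^d`, are connected by a path
of at most `d` edges of `P`. -/
theorem naddef_diameter (d : ℕ) (V : Set (Fin d → ℝ))
    (hV : ∀ x ∈ V, ∀ i, x i = 0 ∨ x i = 1)
    (hfull : affineSpan ℝ (convexHull ℝ V) = ⊤)
    (u v : Fin d → ℝ)
    (hu : u ∈ Set.extremePoints ℝ (convexHull ℝ V))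
    (hv : v ∈ Set.extremePoints ℝ (convexHull ℝ V)) :
    ∃ k, k ≤ d ∧ ∃ w : Fin (k + 1) → (Fin d → ℝ),
      w 0 = u ∧ w (Fin.last k) = v ∧
      (∀ i, w i ∈ Set.extremePoints ℝ (convexHull ℝ V)) ∧
      (∀ i : Fin k, w i.castSucc ≠ w i.succ ∧
        IsExtreme ℝ (convexHull ℝ V) (segment ℝ (w i.castSucc) (w i.succ))) := by
  obtain ⟨k, hk, hw⟩ := naddef_aux V hV d Finset.univ (by simp) u v hu hv
    (fun i hi => absurd (Finset.mem_univ i) hi)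
  exact ⟨k, by simpa using hk, hw⟩
end
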